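/- arXiv:2210.10577 — 11 statements merged into one kernel-verified Lean document; each statement's English description precedes it below -/
import Mathlib

section
/- For each positive integer n, the Fibonacci number F_n is the smallest positive integer m such that there is no set L ⊆ {1, ..., n−1} with no two consecutive elements (i.e., |i − j| ≠ 1 for all i, j ∈ L) satisfying m = ∑_{ℓ∈L} F_ℓ. -/
theorem fibAux_pos (F : ℕ → ℕ) (hF1 : F 1 = 1) (hF2 : F 2 = 2)
    (hFrec : ∀ n, 3 ≤ n → F n = F (n - 1) + F (n - 2)) :
    ∀ n, 1 ≤ n → 0 < F n := by
  intro n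
  induction n using Nat.strong_induction_on with
  | _ n ih =>
    intro hn
    rcases Nat.lt_or_ge n 3 with h | h
    · interval_cases n <;> omega
    · rw [hFrec n h]
      have := ih (n - 1) (by omega) (by omega)
      omega

theorem sum_lt_fibAux (F : ℕ → ℕ) (hF1 : F 1 = 1) (hF2 : F 2 = 2)
    (hFrec : ∀ n, 3 ≤ n → F n = F (n - 1) + F (n - 2)) :
    ∀ n, 1 ≤ n → ∀ L : Finset ℕ, L ⊆ Finset.Icc 1 (n - 1) →
      (∀ i ∈ L, ∀ j ∈ L, ((i : ℤ) - (j : ℤ)).natAbs ≠ 1) →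
      ∑ ℓ ∈ L, F ℓ < F n := by
  intro n
  induction n using Nat.strong_induction_on with
  | _ n ih =>
    intro hn L hL hNC
    rcases Nat.lt_or_ge n 3 with h3 | h3
    · interval_cases n
      · have hLe : L = ∅ := Finset.subset_empty.mp (by simpa using hL)
        subst hLe
        simp [hF1]
      · rcases Finset.subset_singleton_iff.mp (by simpa using hL) with h | h <;>
          subst h <;> simp [hF1, hF2]
    · by_cases hk : (n - 1) ∈ L
      · have hx : ∀ x ∈ L.erase (n - 1), x ∈ Finset.Icc 1 (n - 3) := by
          intro x hxm
          have hxL := Finset.mem_of_mem_erase hxm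
          have hxne := Finset.ne_of_mem_erase hxm
          have h1 := hL hxL
          have h2 := hNC x hxL (n - 1) hk
          simp only [Finset.mem_Icc] at h1 ⊢
          omega
        have hsum : ∑ ℓ ∈ L, F ℓ = F (n - 1) + ∑ ℓ ∈ L.erase (n - 1), F ℓ :=
          (Finset.add_sum_erase _ _ hk).symm
        have h1 := ih (n - 2) (by omega) (by omega) (L.erase (n - 1))
          (fun x hx' => by
            have := hx x hx'
            simp only [Finset.mem_Icc] at this ⊢
            omega)
          (fun i hi j hj => hNC i (Finset.mem_of_mem_erase hi) j (Finset.mem_of_mem_erase hj))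
        rw [hFrec n h3, hsum]
        omega
      · have hL' : L ⊆ Finset.Icc 1 (n - 1 - 1) := by
          intro x hx
          have h1 := hL hx
          have : x ≠ n - 1 := fun he => hk (he ▸ hx)
          simp only [Finset.mem_Icc] at h1 ⊢
          omega
        have h1 := ih (n - 1) (by omega) (by omega) L hL' hNC
        rw [hFrec n h3]
        omega

theorem exists_rep_fibAux (F : ℕ → ℕ) (hF1 : F 1 = 1) (hF2 : F 2 = 2)
    (hFrec : ∀ n, 3 ≤ n → F n = F (n - 1) + F (n - 2)) :
    ∀ n, 1 ≤ n → ∀ m, 0 < m → m < F n →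
      ∃ L : Finset ℕ, L ⊆ Finset.Icc 1 (n - 1) ∧
        (∀ i ∈ L, ∀ j ∈ L, ((i : ℤ) - (j : ℤ)).natAbs ≠ 1) ∧
        m = ∑ ℓ ∈ L, F ℓ := by
  intro n
  induction n using Nat.strong_induction_on with
  | _ n ih =>
    intro hn m hm hmlt
    rcases Nat.lt_or_ge n 3 with h3 | h3
    · interval_cases n
      · rw [hF1] at hmlt; omega
      · refine ⟨{1}, ?_, ?_, ?_⟩
        · simp
        · intro i hi j hj
          simp only [Finset.mem_singleton] at hi hj
          subst hi; subst hj; simp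
        · rw [hF2] at hmlt
          simp [hF1]
          omega
    · by_cases hcase : m < F (n - 1)
      · obtain ⟨L, hL, hNC, heq⟩ := ih (n - 1) (by omega) (by omega) m hm hcase
        refine ⟨L, fun x hx => ?_, hNC, heq⟩
        have := hL hx
        simp only [Finset.mem_Icc] at this ⊢
        omega
      · have hrec := hFrec n h3
        by_cases hm2 : m = F (n - 1)
        · refine ⟨{n - 1}, ?_, ?_, ?_⟩
          · simp only [Finset.singleton_subset_iff, Finset.mem_Icc]
            omega
          · intro i hi j hj
            simp only [Finset.mem_singleton] at hi hj
            subst hi; subst hj; simp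
          · simp [hm2]
        · obtain ⟨L, hL, hNC, heq⟩ := ih (n - 2) (by omega) (by omega) (m - F (n - 1))
            (by omega) (by omega)
          have hmemL : ∀ x ∈ L, 1 ≤ x ∧ x ≤ n - 2 - 1 := by
            intro x hx
            have := hL hx
            simpa only [Finset.mem_Icc] using this
          have hnotin : (n - 1) ∉ L := by
            intro h
            have := hmemL _ h
            omega
          refine ⟨insert (n - 1) L, ?_, ?_, ?_⟩
          · intro x hx
            rcases Finset.mem_insert.mp hx with h | h
            · subst h; simp only [Finset.mem_Icc]; omega
            · have := hmemL x h
              simp only [Finset.mem_Icc]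
              omega
          · intro i hi j hj
            rcases Finset.mem_insert.mp hi with hi' | hi' <;>
              rcases Finset.mem_insert.mp hj with hj' | hj'
            · subst hi'; subst hj'; simp
            · have := hmemL j hj'; subst hi'; omega
            · have := hmemL i hi'; subst hj'; omega
            · exact hNC i hi' j hj'
          · rw [Finset.sum_insert hnotin, ← heq]
            omega

theorem fibonacci_is_least_nondecomposable
    (F : ℕ → ℕ) (hF1 : F 1 = 1) (hF2 : F 2 = 2)
    (hFrec : ∀ n, 3 ≤ n → F n = F (n - 1) + F (n - 2))
    (n : ℕ) (hn : 1 ≤ n) :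
    IsLeast {m | 0 < m ∧
      ¬ ∃ L : Finset ℕ, L ⊆ Finset.Icc 1 (n - 1) ∧
        (∀ i ∈ L, ∀ j ∈ L, ((i : ℤ) - (j : ℤ)).natAbs ≠ 1) ∧
        m = ∑ ℓ ∈ L, F ℓ} (F n) := by
  constructor
  · refine ⟨fibAux_pos F hF1 hF2 hFrec n hn, ?_⟩
    rintro ⟨L, hL, hNC, heq⟩
    have := sum_lt_fibAux F hF1 hF2 hFrec n hn L hL hNC
    omega
  · rintro m ⟨hm, hnot⟩
    by_contra h
    push_neg at h
    exact hnot (exists_rep_fibAux F hF1 hF2 hFrec n hn m hm h)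
end

section
/- Let q_n denote the n-th term of the Fibonacci quilt sequence. Then q_{n+1} = q_n + q_{n−4} for all n ≥ 6, and q_{n+1} = q_{n−1} + q_{n−2} for all n ≥ 5. -/
set_option maxRecDepth 40000

/-- Indices `i` and `j` are adjacent in the log cabin quilt pattern. -/
def QuiltAdj (i j : ℕ) : Prop :=
  ((i : ℤ) - (j : ℤ)).natAbs ∈ ({1, 3, 4} : Set ℕ) ∨ ({i, j} : Set ℕ) = {1, 3}

/-- `q` is the Fibonacci quilt sequence (indexed from `1`; `q 0` unconstrained). -/
def IsQuiltSeq (q : ℕ → ℕ) : Prop :=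
  ∀ n, 1 ≤ n → IsLeast {m | 0 < m ∧
    ¬ ∃ L : Finset ℕ, L ⊆ Finset.Icc 1 (n - 1) ∧
      (∀ i ∈ L, ∀ j ∈ L, ¬ QuiltAdj i j) ∧
      m = ∑ ℓ ∈ L, q ℓ} (q n)

/-! ### Boolean adjacency -/

def adjB (i j : ℕ) : Bool :=
  (i+1 == j) || (j+1 == i) || (i+3 == j) || (j+3 == i) || (i+4 == j) || (j+4 == i)
  || ((i == 1) && (j == 3)) || ((i == 3) && (j == 1))

lemma quiltAdj_iff (i j : ℕ) : QuiltAdj i j ↔ adjB i j = true := by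
  unfold QuiltAdj adjB
  constructor
  · rintro (h | h)
    · simp only [Set.mem_insert_iff, Set.mem_singleton_iff] at h
      simp only [Bool.or_eq_true, beq_iff_eq, Bool.and_eq_true]
      omega
    · have h1 : (1 : ℕ) ∈ ({i, j} : Set ℕ) := by rw [h]; simp
      have h3 : (3 : ℕ) ∈ ({i, j} : Set ℕ) := by rw [h]; simp
      simp only [Set.mem_insert_iff, Set.mem_singleton_iff] at h1 h3
      simp only [Bool.or_eq_true, beq_iff_eq, Bool.and_eq_true]
      omega
  · intro h
    simp only [Bool.or_eq_true, beq_iff_eq, Bool.and_eq_true] at h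
    rcases h with ((((((h|h)|h)|h)|h)|h)|⟨h1,h2⟩)|⟨h1,h2⟩
    · left; simp only [Set.mem_insert_iff, Set.mem_singleton_iff]; omega
    · left; simp only [Set.mem_insert_iff, Set.mem_singleton_iff]; omega
    · left; simp only [Set.mem_insert_iff, Set.mem_singleton_iff]; omega
    · left; simp only [Set.mem_insert_iff, Set.mem_singleton_iff]; omega
    · left; simp only [Set.mem_insert_iff, Set.mem_singleton_iff]; omega
    · left; simp only [Set.mem_insert_iff, Set.mem_singleton_iff]; omega
    · right; subst h1; subst h2; rfl
    · right; subst h1; subst h2; exact Set.pair_comm 3 1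

lemma not_quiltAdj_iff (i j : ℕ) : ¬ QuiltAdj i j ↔
    (i+1 ≠ j ∧ j+1 ≠ i ∧ i+3 ≠ j ∧ j+3 ≠ i ∧ i+4 ≠ j ∧ j+4 ≠ i
      ∧ ¬(i = 1 ∧ j = 3) ∧ ¬(i = 3 ∧ j = 1)) := by
  rw [quiltAdj_iff]
  unfold adjB
  simp only [Bool.or_eq_true, beq_iff_eq, Bool.and_eq_true, not_or]
  tauto

/-! ### Representability -/

def QRep (q : ℕ → ℕ) (n m : ℕ) : Prop :=
  ∃ L : Finset ℕ, L ⊆ Finset.Icc 1 n ∧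
    (∀ i ∈ L, ∀ j ∈ L, ¬ QuiltAdj i j) ∧ m = ∑ ℓ ∈ L, q ℓ

def f : ℕ → ℕ := fun n => [0,1,2,3,4,5,7,9,12,16].getD n 0

def RepF (n m : ℕ) : Prop :=
  ∃ L ∈ (Finset.Icc 1 n).powerset,
    (∀ i ∈ L, ∀ j ∈ L, adjB i j = false) ∧ m = ∑ ℓ ∈ L, f ℓ

instance (n m : ℕ) : Decidable (RepF n m) := by unfold RepF; infer_instance

variable {q : ℕ → ℕ}

lemma hq' (hq : IsQuiltSeq q) (n : ℕ) (hn : 1 ≤ n) :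
    IsLeast {m | 0 < m ∧ ¬ QRep q (n-1) m} (q n) := hq n hn

lemma qpos (hq : IsQuiltSeq q) (n : ℕ) (hn : 1 ≤ n) : 0 < q n := (hq' hq n hn).1.1

lemma qnotrep (hq : IsQuiltSeq q) (n : ℕ) (hn : 1 ≤ n) :
    ¬ QRep q (n-1) (q n) := (hq' hq n hn).1.2

lemma qleast (hq : IsQuiltSeq q) {n m : ℕ} (hn : 1 ≤ n) (hm : 0 < m)
    (hlt : m < q n) : QRep q (n-1) m := by
  by_contra h
  exact absurd ((hq' hq n hn).2 ⟨hm, h⟩) (by omega)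

lemma rep_mono {n n' m : ℕ} (h : n ≤ n') (hr : QRep q n m) : QRep q n' m := by
  obtain ⟨L, hL, hind, hs⟩ := hr
  exact ⟨L, hL.trans (Finset.Icc_subset_Icc_right h), hind, hs⟩

lemma rep_self (n : ℕ) (hn : 1 ≤ n) : QRep q n (q n) := by
  refine ⟨{n}, ?_, ?_, ?_⟩
  · simp only [Finset.singleton_subset_iff, Finset.mem_Icc]; omega
  · intro i hi j hj
    simp only [Finset.mem_singleton] at hi hj
    subst hi; subst hj
    rw [not_quiltAdj_iff]; omega
  · simp

lemma q_succ_lt (hq : IsQuiltSeq q) (k : ℕ) (hk : 1 ≤ k) : q k < q (k+1) := by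
  by_contra h
  push_neg at h
  have hpos := qpos hq (k+1) (by omega)
  have hnr := qnotrep hq (k+1) (by omega)
  have : QRep q k (q (k+1)) := by
    rcases lt_or_eq_of_le h with h' | h'
    · exact rep_mono (by omega) (qleast hq hk hpos h')
    · rw [h']; exact rep_self k hk
  exact hnr this

lemma q_mono (hq : IsQuiltSeq q) {a b : ℕ} (ha : 1 ≤ a) (hab : a ≤ b) :
    q a ≤ q b := by
  induction b, hab using Nat.le_induction with
  | base => exact le_rfl
  | succ b hb ih => exact le_trans ih (le_of_lt (q_succ_lt hq b (by omega)))

lemma q_strict (hq : IsQuiltSeq q) {a b : ℕ} (ha : 1 ≤ a) (hab : a < b) :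
    q a < q b := by
  have h1 : q a ≤ q (b-1) := q_mono hq ha (by omega)
  have h2 : q (b-1) < q b := by
    have := q_succ_lt hq (b-1) (by omega)
    rwa [show b - 1 + 1 = b by omega] at this
  omega

lemma rep_le (hq : IsQuiltSeq q) {n m : ℕ} (hn : 1 ≤ n) (hm : 0 < m)
    (hle : m ≤ q n) : QRep q n m := by
  rcases lt_or_eq_of_le hle with h | h
  · exact rep_mono (by omega) (qleast hq hn hm h)
  · rw [h]; exact rep_self n hn

/-- bridge between `QRep` and the decidable `RepF` -/
lemma rep_iff_repF {n m : ℕ} (hv : ∀ i, 1 ≤ i → i ≤ n → q i = f i) :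
    QRep q n m ↔ RepF n m := by
  constructor
  · rintro ⟨L, hL, hind, hs⟩
    refine ⟨L, Finset.mem_powerset.2 hL, ?_, ?_⟩
    · intro i hi j hj
      have := hind i hi j hj
      rw [quiltAdj_iff] at this
      simpa using this
    · rw [hs]
      refine Finset.sum_congr rfl fun ℓ hℓ => ?_
      have := hL hℓ
      rw [Finset.mem_Icc] at this
      exact hv ℓ this.1 this.2
  · rintro ⟨L, hL, hind, hs⟩
    rw [Finset.mem_powerset] at hL
    refine ⟨L, hL, ?_, ?_⟩
    · intro i hi j hj
      rw [quiltAdj_iff]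
      simp [hind i hi j hj]
    · rw [hs]
      refine Finset.sum_congr rfl fun ℓ hℓ => ?_
      have := hL hℓ
      rw [Finset.mem_Icc] at this
      exact (hv ℓ this.1 this.2).symm

lemma q_val (hq : IsQuiltSeq q) (k v : ℕ) (hk : 1 ≤ k)
    (hv : ∀ i, 1 ≤ i → i ≤ k - 1 → q i = f i)
    (h1 : 0 < v) (h2 : ¬ RepF (k-1) v) (h3 : ∀ m < v, 0 < m → RepF (k-1) m) :
    q k = v := by
  refine (hq' hq k hk).unique ⟨⟨h1, ?_⟩, ?_⟩
  · intro hr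
    exact h2 ((rep_iff_repF hv).1 hr)
  · rintro m ⟨hm, hnr⟩
    by_contra h
    push_neg at h
    exact hnr ((rep_iff_repF hv).2 (h3 m h hm))

lemma q_vals (hq : IsQuiltSeq q) : ∀ i, 1 ≤ i → i ≤ 9 → q i = f i := by
  have v1 : q 1 = 1 := q_val hq 1 1 (by omega) (by omega) (by omega) (by decide) (by decide)
  have h1 : ∀ i, 1 ≤ i → i ≤ 1 → q i = f i := by
    intro i hi hi'; interval_cases i; exact v1
  have v2 : q 2 = 2 := q_val hq 2 2 (by omega) h1 (by omega) (by decide) (by decide)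
  have h2 : ∀ i, 1 ≤ i → i ≤ 2 → q i = f i := by
    intro i hi hi'; interval_cases i; exacts [v1, v2]
  have v3 : q 3 = 3 := q_val hq 3 3 (by omega) h2 (by omega) (by decide) (by decide)
  have h3 : ∀ i, 1 ≤ i → i ≤ 3 → q i = f i := by
    intro i hi hi'; interval_cases i; exacts [v1, v2, v3]
  have v4 : q 4 = 4 := q_val hq 4 4 (by omega) h3 (by omega) (by decide) (by decide)
  have h4 : ∀ i, 1 ≤ i → i ≤ 4 → q i = f i := by
    intro i hi hi'; interval_cases i; exacts [v1, v2, v3, v4]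
  have v5 : q 5 = 5 := q_val hq 5 5 (by omega) h4 (by omega) (by decide) (by decide)
  have h5 : ∀ i, 1 ≤ i → i ≤ 5 → q i = f i := by
    intro i hi hi'; interval_cases i; exacts [v1, v2, v3, v4, v5]
  have v6 : q 6 = 7 := q_val hq 6 7 (by omega) h5 (by omega) (by decide) (by decide)
  have h6 : ∀ i, 1 ≤ i → i ≤ 6 → q i = f i := by
    intro i hi hi'; interval_cases i; exacts [v1, v2, v3, v4, v5, v6]
  have v7 : q 7 = 9 := q_val hq 7 9 (by omega) h6 (by omega) (by decide) (by decide)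
  have h7 : ∀ i, 1 ≤ i → i ≤ 7 → q i = f i := by
    intro i hi hi'; interval_cases i; exacts [v1, v2, v3, v4, v5, v6, v7]
  have v8 : q 8 = 12 := q_val hq 8 12 (by omega) h7 (by omega) (by decide) (by decide)
  have h8 : ∀ i, 1 ≤ i → i ≤ 8 → q i = f i := by
    intro i hi hi'; interval_cases i; exacts [v1, v2, v3, v4, v5, v6, v7, v8]
  have v9 : q 9 = 16 := q_val hq 9 16 (by omega) h8 (by omega) (by decide) (by decide)
  intro i hi hi'; interval_cases i
  exacts [v1, v2, v3, v4, v5, v6, v7, v8, v9]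

/-! ### Structure of independent sets -/

lemma decomp1 {m : ℕ} (hm : 4 ≤ m) {L : Finset ℕ} (hL : L ⊆ Finset.Icc 1 m)
    (hind : ∀ i ∈ L, ∀ j ∈ L, ¬ QuiltAdj i j) (hmL : m ∈ L) :
    ∀ j ∈ L, j ≠ m → (j ∈ Finset.Icc 1 (m-5) ∨ j = m-2) := by
  intro j hj hne
  have h1 := hL hj
  rw [Finset.mem_Icc] at h1
  have h2 := hind j hj m hmL
  rw [not_quiltAdj_iff] at h2
  simp only [Finset.mem_Icc]
  omega

lemma decomp2 {m : ℕ} (hm : 4 ≤ m) {L : Finset ℕ} (hL : L ⊆ Finset.Icc 1 m)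
    (hind : ∀ i ∈ L, ∀ j ∈ L, ¬ QuiltAdj i j) (hmL : m ∈ L) (hm2 : m - 2 ∈ L) :
    ∀ j ∈ L, j ≠ m → j ≠ m - 2 → j ∈ Finset.Icc 1 (m-7) := by
  intro j hj hne hne2
  have h0 := decomp1 hm hL hind hmL j hj hne
  rw [Finset.mem_Icc] at h0
  have h1 := hL hj
  rw [Finset.mem_Icc] at h1
  have h2 := hind j hj (m-2) hm2
  rw [not_quiltAdj_iff] at h2
  simp only [Finset.mem_Icc]
  omega

lemma indep_subset {L L' : Finset ℕ} (h : L' ⊆ L)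
    (hind : ∀ i ∈ L, ∀ j ∈ L, ¬ QuiltAdj i j) :
    ∀ i ∈ L', ∀ j ∈ L', ¬ QuiltAdj i j :=
  fun i hi j hj => hind i (h hi) j (h hj)

lemma rep_add_top {n : ℕ} (hn : 6 ≤ n) {r : ℕ} (h : QRep q (n-5) r) :
    QRep q n (q n + r) := by
  obtain ⟨L, hL, hind, hs⟩ := h
  have hnL : n ∉ L := by
    intro hmem
    have := hL hmem
    rw [Finset.mem_Icc] at this
    omega
  refine ⟨insert n L, ?_, ?_, ?_⟩
  · refine Finset.insert_subset ?_ (hL.trans (Finset.Icc_subset_Icc_right (by omega)))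
    rw [Finset.mem_Icc]; omega
  · intro i hi j hj
    rw [Finset.mem_insert] at hi hj
    rcases hi with hi | hi <;> rcases hj with hj | hj
    · subst hi; subst hj; rw [not_quiltAdj_iff]; omega
    · subst hi
      have := hL hj; rw [Finset.mem_Icc] at this
      rw [not_quiltAdj_iff]; omega
    · subst hj
      have := hL hi; rw [Finset.mem_Icc] at this
      rw [not_quiltAdj_iff]; omega
    · exact hind i hi j hj
  · rw [Finset.sum_insert hnL, hs]

/-! ### The main induction -/

lemma main (hq : IsQuiltSeq q) (n : ℕ) :
    (∀ L : Finset ℕ, L ⊆ Finset.Icc 1 (n-3) →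
      (∀ i ∈ L, ∀ j ∈ L, ¬ QuiltAdj i j) → 1 ≤ n → (∑ ℓ ∈ L, q ℓ) < q n)
    ∧ (6 ≤ n → q (n + 1) = q n + q (n - 4))
    ∧ (5 ≤ n → q (n + 1) = q (n - 1) + q (n - 2)) := by
  induction n using Nat.strong_induction_on with
  | _ n IH =>
  have hvals := q_vals hq
  -- Part B : bound on sums of independent subsets of [1, n-3]
  have hB : ∀ L : Finset ℕ, L ⊆ Finset.Icc 1 (n-3) →
      (∀ i ∈ L, ∀ j ∈ L, ¬ QuiltAdj i j) → 1 ≤ n → (∑ ℓ ∈ L, q ℓ) < q n := by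
    intro L hL hind hn1
    by_cases hsmall : n ≤ 10
    · -- base cases
      have hfq : ∀ {k c : ℕ}, k ≤ 7 → L ⊆ Finset.Icc 1 k →
          (∀ L' ∈ (Finset.Icc 1 k).powerset,
            (∀ i ∈ L', ∀ j ∈ L', adjB i j = false) → (∑ ℓ ∈ L', f ℓ) ≤ c) →
          (∑ ℓ ∈ L, q ℓ) ≤ c := by
        intro k c hk hLk hdec
        have hsum : ∑ ℓ ∈ L, q ℓ = ∑ ℓ ∈ L, f ℓ := by
          refine Finset.sum_congr rfl fun ℓ hℓ => ?_
          have := hLk hℓ; rw [Finset.mem_Icc] at this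
          exact hvals ℓ this.1 (by omega)
        rw [hsum]
        refine hdec L (Finset.mem_powerset.2 hLk) ?_
        intro i hi j hj
        have := hind i hi j hj
        rw [quiltAdj_iff] at this
        simpa using this
      interval_cases n
      · have : L = ∅ := Finset.subset_empty.1 (by simpa using hL)
        subst this; simpa using qpos hq 1 (by omega)
      · have : L = ∅ := Finset.subset_empty.1 (by simpa using hL)
        subst this; simpa using qpos hq 2 (by omega)
      · have : L = ∅ := Finset.subset_empty.1 (by simpa using hL)
        subst this; simpa using qpos hq 3 (by omega)
      · have hc := hfq (k := 1) (c := 1) (by omega) hL (by decide)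
        have h4 : q 4 = 4 := hvals 4 (by omega) (by omega)
        omega
      · have hc := hfq (k := 2) (c := 2) (by omega) hL (by decide)
        have h5 : q 5 = 5 := hvals 5 (by omega) (by omega)
        omega
      · have hc := hfq (k := 3) (c := 3) (by omega) hL (by decide)
        have h6 : q 6 = 7 := hvals 6 (by omega) (by omega)
        omega
      · have hc := hfq (k := 4) (c := 6) (by omega) hL (by decide)
        have h7 : q 7 = 9 := hvals 7 (by omega) (by omega)
        omega
      · have hc := hfq (k := 5) (c := 8) (by omega) hL (by decide)
        have h8 : q 8 = 12 := hvals 8 (by omega) (by omega)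
        omega
      · have hc := hfq (k := 6) (c := 11) (by omega) hL (by decide)
        have h9 : q 9 = 16 := hvals 9 (by omega) (by omega)
        omega
      · have hc := hfq (k := 7) (c := 14) (by omega) hL (by decide)
        have h9 : q 9 = 16 := hvals 9 (by omega) (by omega)
        have hlt : q 9 < q 10 := q_strict hq (by omega) (by omega)
        omega
    · -- general case, n ≥ 11
      push_neg at hsmall
      have e1 : q n = q (n-2) + q (n-3) := by
        have := (IH (n-1) (by omega)).2.2 (by omega)
        rwa [show n-1+1 = n by omega, show n-1-1 = n-2 by omega,
          show n-1-2 = n-3 by omega] at this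
      have e2 : q (n-2) = q (n-4) + q (n-5) := by
        have := (IH (n-3) (by omega)).2.2 (by omega)
        rwa [show n-3+1 = n-2 by omega, show n-3-1 = n-4 by omega,
          show n-3-2 = n-5 by omega] at this
      by_cases hmem : n - 3 ∈ L
      · have hs1 : q (n-3) + ∑ ℓ ∈ L.erase (n-3), q ℓ = ∑ ℓ ∈ L, q ℓ :=
          Finset.add_sum_erase _ _ hmem
        by_cases hmem2 : n - 5 ∈ L
        · have hmem2' : n - 5 ∈ L.erase (n-3) := Finset.mem_erase.2 ⟨by omega, hmem2⟩
          have hs2 : q (n-5) + ∑ ℓ ∈ (L.erase (n-3)).erase (n-5), q ℓ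
              = ∑ ℓ ∈ L.erase (n-3), q ℓ := Finset.add_sum_erase _ _ hmem2'
          have hsub : (L.erase (n-3)).erase (n-5) ⊆ Finset.Icc 1 (n-10) := by
            intro j hj
            simp only [Finset.mem_erase] at hj
            obtain ⟨hj5, hj3, hjL⟩ := hj
            have := decomp2 (m := n-3) (by omega) hL hind hmem
              (by rw [show n-3-2 = n-5 by omega]; exact hmem2) j hjL hj3
              (by rw [show n-3-2 = n-5 by omega]; exact hj5)
            rwa [show n-3-7 = n-10 by omega] at this
          have hbnd : ∑ ℓ ∈ (L.erase (n-3)).erase (n-5), q ℓ < q (n-7) :=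
            (IH (n-7) (by omega)).1 _ (by rwa [show n-7-3 = n-10 by omega])
              (indep_subset (fun x hx => Finset.mem_of_mem_erase
                (Finset.mem_of_mem_erase hx)) hind) (by omega)
          have hmono : q (n-7) ≤ q (n-4) := q_mono hq (by omega) (by omega)
          omega
        · have hsub : L.erase (n-3) ⊆ Finset.Icc 1 (n-8) := by
            intro j hj
            rw [Finset.mem_erase] at hj
            rcases decomp1 (m := n-3) (by omega) hL hind hmem j hj.2 hj.1 with h | h
            · rwa [show n-3-5 = n-8 by omega] at h
            · rw [show n-3-2 = n-5 by omega] at h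
              exact absurd (h ▸ hj.2) hmem2
          have hbnd : ∑ ℓ ∈ L.erase (n-3), q ℓ < q (n-5) :=
            (IH (n-5) (by omega)).1 _ (by rwa [show n-5-3 = n-8 by omega])
              (indep_subset (fun x hx => Finset.mem_of_mem_erase hx) hind) (by omega)
          have hpos4 : 0 < q (n-4) := qpos hq (n-4) (by omega)
          omega
      · -- n-3 ∉ L, so L ⊆ [1, n-4]
        have hsub : L ⊆ Finset.Icc 1 (n-4) := by
          intro j hj
          have h1 := hL hj; rw [Finset.mem_Icc] at h1
          rw [Finset.mem_Icc]
          have : j ≠ n - 3 := fun h => hmem (h ▸ hj)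
          omega
        have hbnd := (IH (n-1) (by omega)).1 L (by rwa [show n-1-3 = n-4 by omega])
          hind (by omega)
        have hmono : q (n-1) ≤ q n := q_mono hq (by omega) (by omega)
        omega
  -- Part R1
  have hR1 : 6 ≤ n → q (n + 1) = q n + q (n - 4) := by
    intro h6
    by_cases h9 : 9 ≤ n
    · -- recurrences at smaller indices
      have e1 : q n = q (n-1) + q (n-5) := by
        have := (IH (n-1) (by omega)).2.1 (by omega)
        rwa [show n-1+1 = n by omega, show n-1-4 = n-5 by omega] at this
      have e2 : q (n-2) = q (n-4) + q (n-5) := by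
        have := (IH (n-3) (by omega)).2.2 (by omega)
        rwa [show n-3+1 = n-2 by omega, show n-3-1 = n-4 by omega,
          show n-3-2 = n-5 by omega] at this
      have e3 : q (n-2) = q (n-3) + q (n-7) := by
        have := (IH (n-3) (by omega)).2.1 (by omega)
        rwa [show n-3+1 = n-2 by omega, show n-3-4 = n-7 by omega] at this
      have e4 : q (n-1) = q (n-3) + q (n-4) := by
        have := (IH (n-2) (by omega)).2.2 (by omega)
        rwa [show n-2+1 = n-1 by omega, show n-2-1 = n-3 by omega,
          show n-2-2 = n-4 by omega] at this
      -- non-representability of q n + q (n-4) with indices ≤ n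
      have hnotrep : ¬ QRep q n (q n + q (n-4)) := by
        rintro ⟨L, hL, hind, hsum⟩
        by_cases hn : n ∈ L
        · have hs1 : q n + ∑ ℓ ∈ L.erase n, q ℓ = ∑ ℓ ∈ L, q ℓ :=
            Finset.add_sum_erase _ _ hn
          have hsum1 : ∑ ℓ ∈ L.erase n, q ℓ = q (n-4) := by omega
          by_cases h2 : n - 2 ∈ L
          · have h2' : n - 2 ∈ L.erase n := Finset.mem_erase.2 ⟨by omega, h2⟩
            have hle : q (n-2) ≤ ∑ ℓ ∈ L.erase n, q ℓ :=
              Finset.single_le_sum (fun i _ => Nat.zero_le _) h2'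
            have : q (n-4) < q (n-2) := q_strict hq (by omega) (by omega)
            omega
          · have hsub : L.erase n ⊆ Finset.Icc 1 (n-5) := by
              intro j hj
              rw [Finset.mem_erase] at hj
              rcases decomp1 (by omega) hL hind hn j hj.2 hj.1 with h | h
              · exact h
              · exact absurd (h ▸ hj.2) h2
            refine qnotrep hq (n-4) (by omega) ?_
            rw [show n-4-1 = n-5 by omega]
            exact ⟨L.erase n, hsub,
              indep_subset (fun x hx => Finset.mem_of_mem_erase hx) hind, hsum1.symm⟩
        · have hL1 : L ⊆ Finset.Icc 1 (n-1) := by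
            intro j hj
            have h1 := hL hj; rw [Finset.mem_Icc] at h1
            rw [Finset.mem_Icc]
            have : j ≠ n := fun h => hn (h ▸ hj)
            omega
          by_cases hm1 : n - 1 ∈ L
          · have hs1 : q (n-1) + ∑ ℓ ∈ L.erase (n-1), q ℓ = ∑ ℓ ∈ L, q ℓ :=
              Finset.add_sum_erase _ _ hm1
            have hsum1 : ∑ ℓ ∈ L.erase (n-1), q ℓ = q (n-2) := by omega
            by_cases h3 : n - 3 ∈ L
            · have h3' : n - 3 ∈ L.erase (n-1) := Finset.mem_erase.2 ⟨by omega, h3⟩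
              have hs2 : q (n-3) + ∑ ℓ ∈ (L.erase (n-1)).erase (n-3), q ℓ
                  = ∑ ℓ ∈ L.erase (n-1), q ℓ := Finset.add_sum_erase _ _ h3'
              have hsum2 : ∑ ℓ ∈ (L.erase (n-1)).erase (n-3), q ℓ = q (n-7) := by omega
              have hsub : (L.erase (n-1)).erase (n-3) ⊆ Finset.Icc 1 (n-8) := by
                intro j hj
                simp only [Finset.mem_erase] at hj
                obtain ⟨hj3, hj1, hjL⟩ := hj
                have := decomp2 (m := n-1) (by omega) hL1 hind hm1
                  (by rw [show n-1-2 = n-3 by omega]; exact h3) j hjL hj1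
                  (by rw [show n-1-2 = n-3 by omega]; exact hj3)
                rwa [show n-1-7 = n-8 by omega] at this
              refine qnotrep hq (n-7) (by omega) ?_
              rw [show n-7-1 = n-8 by omega]
              exact ⟨(L.erase (n-1)).erase (n-3), hsub,
                indep_subset (fun x hx => Finset.mem_of_mem_erase
                  (Finset.mem_of_mem_erase hx)) hind, hsum2.symm⟩
            · have hsub : L.erase (n-1) ⊆ Finset.Icc 1 (n-6) := by
                intro j hj
                rw [Finset.mem_erase] at hj
                rcases decomp1 (m := n-1) (by omega) hL1 hind hm1 j hj.2 hj.1 with h | h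
                · rwa [show n-1-5 = n-6 by omega] at h
                · rw [show n-1-2 = n-3 by omega] at h
                  exact absurd (h ▸ hj.2) h3
              refine qnotrep hq (n-2) (by omega) ?_
              rw [show n-2-1 = n-3 by omega]
              refine rep_mono (show n-6 ≤ n-3 by omega) ?_
              exact ⟨L.erase (n-1), hsub,
                indep_subset (fun x hx => Finset.mem_of_mem_erase hx) hind, hsum1.symm⟩
          · have hL2 : L ⊆ Finset.Icc 1 (n-2) := by
              intro j hj
              have h1 := hL1 hj; rw [Finset.mem_Icc] at h1
              rw [Finset.mem_Icc]
              have : j ≠ n - 1 := fun h => hm1 (h ▸ hj)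
              omega
            by_cases hm2 : n - 2 ∈ L
            · have hs1 : q (n-2) + ∑ ℓ ∈ L.erase (n-2), q ℓ = ∑ ℓ ∈ L, q ℓ :=
                Finset.add_sum_erase _ _ hm2
              have hsum1 : ∑ ℓ ∈ L.erase (n-2), q ℓ = q (n-1) := by omega
              by_cases h4 : n - 4 ∈ L
              · have h4' : n - 4 ∈ L.erase (n-2) := Finset.mem_erase.2 ⟨by omega, h4⟩
                have hs2 : q (n-4) + ∑ ℓ ∈ (L.erase (n-2)).erase (n-4), q ℓ
                    = ∑ ℓ ∈ L.erase (n-2), q ℓ := Finset.add_sum_erase _ _ h4'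
                have hsum2 : ∑ ℓ ∈ (L.erase (n-2)).erase (n-4), q ℓ = q (n-3) := by omega
                have hsub : (L.erase (n-2)).erase (n-4) ⊆ Finset.Icc 1 (n-9) := by
                  intro j hj
                  simp only [Finset.mem_erase] at hj
                  obtain ⟨hj4, hj2, hjL⟩ := hj
                  have := decomp2 (m := n-2) (by omega) hL2 hind hm2
                    (by rw [show n-2-2 = n-4 by omega]; exact h4) j hjL hj2
                    (by rw [show n-2-2 = n-4 by omega]; exact hj4)
                  rwa [show n-2-7 = n-9 by omega] at this
                refine qnotrep hq (n-3) (by omega) ?_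
                rw [show n-3-1 = n-4 by omega]
                refine rep_mono (show n-9 ≤ n-4 by omega) ?_
                exact ⟨(L.erase (n-2)).erase (n-4), hsub,
                  indep_subset (fun x hx => Finset.mem_of_mem_erase
                    (Finset.mem_of_mem_erase hx)) hind, hsum2.symm⟩
              · have hsub : L.erase (n-2) ⊆ Finset.Icc 1 (n-7) := by
                  intro j hj
                  rw [Finset.mem_erase] at hj
                  rcases decomp1 (m := n-2) (by omega) hL2 hind hm2 j hj.2 hj.1 with h | h
                  · rwa [show n-2-5 = n-7 by omega] at h
                  · rw [show n-2-2 = n-4 by omega] at h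
                    exact absurd (h ▸ hj.2) h4
                refine qnotrep hq (n-1) (by omega) ?_
                rw [show n-1-1 = n-2 by omega]
                refine rep_mono (show n-7 ≤ n-2 by omega) ?_
                exact ⟨L.erase (n-2), hsub,
                  indep_subset (fun x hx => Finset.mem_of_mem_erase hx) hind, hsum1.symm⟩
            · have hL3 : L ⊆ Finset.Icc 1 (n-3) := by
                intro j hj
                have h1 := hL2 hj; rw [Finset.mem_Icc] at h1
                rw [Finset.mem_Icc]
                have : j ≠ n - 2 := fun h => hm2 (h ▸ hj)
                omega
              have hbnd := hB L hL3 hind (by omega)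
              have hpos4 : 0 < q (n-4) := qpos hq (n-4) (by omega)
              omega
      -- now conclude
      have hTpos : 0 < q n + q (n-4) := by
        have := qpos hq n (by omega); omega
      have hle : q (n+1) ≤ q n + q (n-4) :=
        (hq' hq (n+1) (by omega)).2 ⟨hTpos, by
          rw [show n+1-1 = n by omega]; exact hnotrep⟩
      have hge : q n + q (n-4) ≤ q (n+1) := by
        by_contra h
        push_neg at h
        have hpos := qpos hq (n+1) (by omega)
        have hnr := qnotrep hq (n+1) (by omega)
        rw [show n+1-1 = n by omega] at hnr
        rcases le_or_gt (q (n+1)) (q n) with hc | hc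
        · exact hnr (rep_le hq (by omega) hpos hc)
        · have hr : QRep q (n-5) (q (n+1) - q n) := by
            have := qleast hq (n := n-4) (m := q (n+1) - q n) (by omega) (by omega)
              (by omega)
            rwa [show n-4-1 = n-5 by omega] at this
          have := rep_add_top (by omega : 6 ≤ n) hr
          rw [show q n + (q (n+1) - q n) = q (n+1) by omega] at this
          exact hnr this
      omega
    · -- base cases n = 6, 7, 8
      push_neg at h9
      have a2 : q 2 = 2 := hvals 2 (by omega) (by omega)
      have a3 : q 3 = 3 := hvals 3 (by omega) (by omega)
      have a4 : q 4 = 4 := hvals 4 (by omega) (by omega)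
      have a6 : q 6 = 7 := hvals 6 (by omega) (by omega)
      have a7 : q 7 = 9 := hvals 7 (by omega) (by omega)
      have a8 : q 8 = 12 := hvals 8 (by omega) (by omega)
      have a9 : q 9 = 16 := hvals 9 (by omega) (by omega)
      interval_cases n
      · show q 7 = q 6 + q 2; omega
      · show q 8 = q 7 + q 3; omega
      · show q 9 = q 8 + q 4; omega
  -- Part R2
  have hR2 : 5 ≤ n → q (n + 1) = q (n - 1) + q (n - 2) := by
    intro h5
    by_cases h7 : 7 ≤ n
    · have e0 : q (n+1) = q n + q (n-4) := hR1 (by omega)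
      have e1 : q n = q (n-2) + q (n-3) := by
        have := (IH (n-1) (by omega)).2.2 (by omega)
        rwa [show n-1+1 = n by omega, show n-1-1 = n-2 by omega,
          show n-1-2 = n-3 by omega] at this
      have e2 : q (n-1) = q (n-3) + q (n-4) := by
        have := (IH (n-2) (by omega)).2.2 (by omega)
        rwa [show n-2+1 = n-1 by omega, show n-2-1 = n-3 by omega,
          show n-2-2 = n-4 by omega] at this
      omega
    · push_neg at h7
      have a3 : q 3 = 3 := hvals 3 (by omega) (by omega)
      have a4 : q 4 = 4 := hvals 4 (by omega) (by omega)
      have a5 : q 5 = 5 := hvals 5 (by omega) (by omega)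
      have a6 : q 6 = 7 := hvals 6 (by omega) (by omega)
      have a7 : q 7 = 9 := hvals 7 (by omega) (by omega)
      interval_cases n
      · show q 6 = q 4 + q 3; omega
      · show q 7 = q 5 + q 4; omega
  exact ⟨hB, hR1, hR2⟩

theorem fibonacci_quilt_recurrences (q : ℕ → ℕ) (hq : IsQuiltSeq q) :
    (∀ n, 6 ≤ n → q (n + 1) = q n + q (n - 4)) ∧
    (∀ n, 5 ≤ n → q (n + 1) = q (n - 1) + q (n - 2)) :=
  ⟨fun n h => (main hq n).2.1 h, fun n h => (main hq n).2.2 h⟩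
end

section
/- Let S be a finite non-empty set of positive integers with k = max S, and let (a_n)_{n≥1} be the S-LID sequence. Then for all integers n ≥ k + 1, a_{n+1} ≥ a_n + a_{n−k}. -/
/-- `L` is an `S`-legal index set: all pairwise index differences avoid `S`. -/
def SlidLegal (S : Set ℕ) (L : Finset ℕ) : Prop :=
  ∀ i ∈ L, ∀ j ∈ L, ((i : ℤ) - (j : ℤ)).natAbs ∉ S

/-- `m` has an `S`-LID decomposition using the terms `a 1, …, a n`. -/
def SlidDecomp (S : Set ℕ) (a : ℕ → ℕ) (n m : ℕ) : Prop :=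
  ∃ L : Finset ℕ, L ⊆ Finset.Icc 1 n ∧ SlidLegal S L ∧ m = ∑ ℓ ∈ L, a ℓ

/-- `a` is the `S`-LID sequence (indexed from `1`; `a 0` is unconstrained):
for each `n ≥ 1`, `a n` is the least positive integer with no `S`-LID
decomposition using `a 1, …, a (n-1)`. -/
def IsSlidSeq (S : Set ℕ) (a : ℕ → ℕ) : Prop :=
  ∀ n, 1 ≤ n → IsLeast {m | 0 < m ∧ ¬ SlidDecomp S a (n - 1) m} (a n)

lemma slid_decomp_of_lt (S : Set ℕ) (a : ℕ → ℕ) (ha : IsSlidSeq S a)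
    (j m : ℕ) (hj : 1 ≤ j) (hm : 0 < m) (hlt : m < a j) :
    SlidDecomp S a (j - 1) m := by
  by_contra h
  exact absurd ((ha j hj).2 ⟨hm, h⟩) (not_le.mpr hlt)

theorem slid_fundamental_lower_bound
    (S : Finset ℕ) (hne : S.Nonempty) (hpos : ∀ s ∈ S, 0 < s)
    (k : ℕ) (hk : k = S.max' hne)
    (a : ℕ → ℕ) (ha : IsSlidSeq ↑S a) :
    ∀ n, k + 1 ≤ n → a n + a (n - k) ≤ a (n + 1) := by
  intro n hn
  have hk1 : 1 ≤ k := hk ▸ hpos _ (S.max'_mem hne)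
  have hn1 : 1 ≤ n := by omega
  have hnk : 1 ≤ n - k := by omega
  obtain ⟨⟨hpos', hnd⟩, _⟩ := ha (n + 1) (by omega)
  by_contra hlt
  push_neg at hlt
  apply hnd
  show SlidDecomp (↑S) a n (a (n + 1))
  rcases lt_or_ge (a (n + 1)) (a n) with h | h
  · obtain ⟨L, hL, hleg, hsum⟩ := slid_decomp_of_lt _ a ha n (a (n + 1)) hn1 hpos' h
    exact ⟨L, hL.trans (Finset.Icc_subset_Icc_right (by omega)), hleg, hsum⟩
  · rcases Nat.eq_zero_or_pos (a (n + 1) - a n) with h0 | hmpos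
    · refine ⟨{n}, by simp [hn1], ?_, ?_⟩
      · intro i hi j hj
        simp only [Finset.mem_singleton] at hi hj
        subst hi; subst hj
        simp only [sub_self, Int.natAbs_zero, Finset.mem_coe]
        intro hc; exact absurd (hpos 0 hc) (lt_irrefl 0)
      · simp; omega
    · have hmlt : a (n + 1) - a n < a (n - k) := by omega
      obtain ⟨L, hL, hleg, hsum⟩ :=
        slid_decomp_of_lt _ a ha (n - k) (a (n + 1) - a n) hnk hmpos hmlt
      have hbound : ∀ ℓ ∈ L, 1 ≤ ℓ ∧ ℓ ≤ n - k - 1 := by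
        intro ℓ hℓ
        have := hL hℓ
        simp only [Finset.mem_Icc] at this
        exact this
      have hnotmem : n ∉ L := by
        intro hc
        have := hbound n hc
        omega
      refine ⟨insert n L, ?_, ?_, ?_⟩
      · intro x hx
        rcases Finset.mem_insert.mp hx with rfl | hx
        · simp [hn1]
        · have := hbound x hx
          simp only [Finset.mem_Icc]
          omega
      · intro i hi j hj
        have key : ∀ ℓ ∈ L, ((n : ℤ) - (ℓ : ℤ)).natAbs ∉ (↑S : Set ℕ) := by
          intro ℓ hℓ hmem
          have hb := hbound ℓ hℓ
          have hle : ((n : ℤ) - (ℓ : ℤ)).natAbs ≤ k := by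
            rw [hk]
            exact S.le_max' _ (Finset.mem_coe.mp hmem)
          omega
        rcases Finset.mem_insert.mp hi with rfl | hi' <;>
          rcases Finset.mem_insert.mp hj with rfl | hj'
        · simp only [sub_self, Int.natAbs_zero, Finset.mem_coe]
          intro hc; exact absurd (hpos 0 hc) (lt_irrefl 0)
        · exact key j hj'
        · rw [show ((i : ℤ) - (j : ℤ)).natAbs = ((j : ℤ) - (i : ℤ)).natAbs by omega]
          exact key i hi'
        · exact hleg i hi' j hj'
      · rw [Finset.sum_insert hnotmem, ← hsum]
        omega
end

section
/- Let T be a finite non-empty set of positive integers and let c = max T. Then there exists an integer K such that for all k ≥ K, the S-LID sequence (a_n)_{n≥1} for S = {1, ..., k} \ {k − t : t ∈ T} satisfies a_{n+1} = a_n + a_{n−k} for all integers n > k + c. -/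
namespace SlidAux

/-- The forbidden-difference set. -/
def Sst (T : Finset ℕ) (k : ℕ) : Set ℕ := Set.Icc 1 k \ ((fun t => k - t) '' ↑T)

/-- Working context. -/
structure Ctx (T : Finset ℕ) (c k : ℕ) (a : ℕ → ℕ) : Prop where
  hTpos : ∀ t ∈ T, 0 < t
  hTle : ∀ t ∈ T, t ≤ c
  hcT : c ∈ T
  hk : 100 * (c + 1) ^ 3 ≤ k
  ha : IsSlidSeq (Sst T k) a

variable {T : Finset ℕ} {c k : ℕ} {a : ℕ → ℕ}

namespace Ctx

lemma hc1 (X : Ctx T c k a) : 1 ≤ c := X.hTpos c X.hcT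

lemma hkbig (X : Ctx T c k a) : 9 * c ^ 3 + 40 * c ^ 2 + 40 * c + 40 ≤ k := by
  have h := X.hk; nlinarith [sq_nonneg c, X.hc1]

lemma zero_not_S (X : Ctx T c k a) : (0 : ℕ) ∉ Sst T k := by
  intro h; exact absurd h.1.1 (by norm_num)

lemma S_le (X : Ctx T c k a) {x : ℕ} (hx : x ∈ Sst T k) : 1 ≤ x ∧ x ≤ k :=
  ⟨hx.1.1, hx.1.2⟩

lemma not_S_big (X : Ctx T c k a) {d : ℕ} (h : k < d) : d ∉ Sst T k :=
  fun hd => absurd (X.S_le hd).2 (by omega)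

/-- An integer `1 ≤ d ≤ k` avoiding `S` is a fringe value `k - t`. -/
lemma not_S_cases (X : Ctx T c k a) {d : ℕ} (hd : d ∉ Sst T k) (h1 : 1 ≤ d) (h2 : d ≤ k) :
    ∃ t ∈ T, d + t = k := by
  have hmem : d ∈ ((fun t => k - t) '' ↑T) := by
    by_contra hn
    exact hd ⟨⟨h1, h2⟩, hn⟩
  obtain ⟨t, ht, heq⟩ := hmem
  have ht' : t ∈ T := ht
  have htc := X.hTle t ht'
  have hck : c < k := by have := X.hkbig; have := X.hc1; nlinarith
  refine ⟨t, ht', ?_⟩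
  simp only at heq
  omega

/-- Any positive difference avoiding `S` satisfies `k ≤ d + c`. -/
lemma allowed_lb (X : Ctx T c k a) {d : ℕ} (hd : d ∉ Sst T k) (h1 : 1 ≤ d) : k ≤ d + c := by
  by_cases h2 : d ≤ k
  · obtain ⟨t, ht, h⟩ := X.not_S_cases hd h1 h2
    have := X.hTle t ht; omega
  · omega

end Ctx

lemma legal_subset {S : Set ℕ} {L L' : Finset ℕ} (h : SlidLegal S L) (hs : L' ⊆ L) :
    SlidLegal S L' := fun i hi j hj => h i (hs hi) j (hs hj)

lemma legal_singleton {S : Set ℕ} (h0 : (0:ℕ) ∉ S) (m : ℕ) : SlidLegal S {m} := by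
  intro i hi j hj
  simp only [Finset.mem_singleton] at hi hj
  subst hi; subst hj; simpa

namespace Ctx

/-- pairwise gap in a legal set, `i < j`: `k ≤ (j - i) + c`. -/
lemma legal_gap (X : Ctx T c k a) {L : Finset ℕ} {i j : ℕ} (h : SlidLegal (Sst T k) L)
    (hi : i ∈ L) (hj : j ∈ L) (hij : i < j) : k ≤ (j - i) + c := by
  have hd := h j hj i hi
  have heq : ((j : ℤ) - (i : ℤ)).natAbs = j - i := by omega
  rw [heq] at hd
  exact X.allowed_lb hd (by omega)

/-- pairwise difference classification, `i < j`. -/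
lemma legal_cases (X : Ctx T c k a) {L : Finset ℕ} {i j : ℕ} (h : SlidLegal (Sst T k) L)
    (hi : i ∈ L) (hj : j ∈ L) (hij : i < j) :
    (i + k < j) ∨ ∃ t ∈ T, i + k = j + t := by
  have hd := h j hj i hi
  have heq : ((j : ℤ) - (i : ℤ)).natAbs = j - i := by omega
  rw [heq] at hd
  by_cases hbig : k < j - i
  · left; omega
  · right
    obtain ⟨t, ht, hk2⟩ := X.not_S_cases hd (by omega) (by omega)
    exact ⟨t, ht, by omega⟩

/-! ### Facts from the defining property -/

lemma apos (X : Ctx T c k a) {n : ℕ} (hn : 1 ≤ n) : 0 < a n := (X.ha n hn).1.1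

lemma anotD (X : Ctx T c k a) {n : ℕ} (hn : 1 ≤ n) :
    ¬ SlidDecomp (Sst T k) a (n - 1) (a n) := (X.ha n hn).1.2

lemma aallD (X : Ctx T c k a) {n x : ℕ} (hn : 1 ≤ n) (hx : 0 < x) (hxa : x < a n) :
    SlidDecomp (Sst T k) a (n - 1) x := by
  by_contra h
  have := (X.ha n hn).2 ⟨hx, h⟩
  omega

end Ctx

lemma D_mono {S : Set ℕ} {a : ℕ → ℕ} {q r x : ℕ} (h : SlidDecomp S a q x) (hqr : q ≤ r) :
    SlidDecomp S a r x := by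
  obtain ⟨L, hL, hleg, hsum⟩ := h
  exact ⟨L, hL.trans (Finset.Icc_subset_Icc_right hqr), hleg, hsum⟩

namespace Ctx

lemma D_single (X : Ctx T c k a) {q : ℕ} (hq : 1 ≤ q) : SlidDecomp (Sst T k) a q (a q) := by
  refine ⟨{q}, ?_, legal_singleton X.zero_not_S q, by simp⟩
  simp only [Finset.singleton_subset_iff, Finset.mem_Icc]
  omega

/-- Add a far-away top index to a decomposition. -/
lemma D_insert (X : Ctx T c k a) {q x m : ℕ} (h : SlidDecomp (Sst T k) a q x)
    (hm : q + k < m) : SlidDecomp (Sst T k) a m (a m + x) := by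
  obtain ⟨L, hL, hleg, hsum⟩ := h
  have hmL : m ∉ L := by
    intro hmem; have := (Finset.mem_Icc.1 (hL hmem)).2; omega
  refine ⟨insert m L, ?_, ?_, ?_⟩
  · intro i hi
    rcases Finset.mem_insert.1 hi with rfl | hiL
    · simp only [Finset.mem_Icc]; omega
    · have := Finset.mem_Icc.1 (hL hiL); simp only [Finset.mem_Icc]; omega
  · intro i hi j hj
    rcases Finset.mem_insert.1 hi with rfl | hiL <;>
      rcases Finset.mem_insert.1 hj with rfl | hjL
    · simpa using X.zero_not_S
    · have hji := (Finset.mem_Icc.1 (hL hjL)).2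
      have hj1 := (Finset.mem_Icc.1 (hL hjL)).1
      have heq : ((i : ℤ) - (j : ℤ)).natAbs = i - j := by omega
      rw [heq]; exact X.not_S_big (by omega)
    · have hii := (Finset.mem_Icc.1 (hL hiL)).2
      have hi1 := (Finset.mem_Icc.1 (hL hiL)).1
      have heq : ((i : ℤ) - (j : ℤ)).natAbs = j - i := by omega
      rw [heq]; exact X.not_S_big (by omega)
    · exact hleg i hiL j hjL
  · rw [Finset.sum_insert hmL, hsum]

/-! ### Monotonicity -/

lemma asucc (X : Ctx T c k a) {n : ℕ} (hn : 1 ≤ n) : a n < a (n + 1) := by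
  have h1 : ¬ SlidDecomp (Sst T k) a n (a (n + 1)) := by
    have := X.anotD (n := n + 1) (by omega); simpa using this
  by_contra hle
  push_neg at hle
  rcases lt_or_eq_of_le hle with hlt | heq
  · have hD := X.aallD hn (X.apos (by omega)) hlt
    exact h1 (D_mono hD (by omega))
  · exact h1 (heq ▸ X.D_single hn)

lemma amono (X : Ctx T c k a) {p q : ℕ} (hp : 1 ≤ p) (hpq : p ≤ q) : a p ≤ a q := by
  induction q with
  | zero => omega
  | succ q ih =>
    rcases Nat.lt_or_ge p (q + 1) with h | h
    · exact (ih (by omega)).trans (le_of_lt (X.asucc (by omega)))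
    · have hpq2 : p = q + 1 := by omega
      subst hpq2; rfl

lemma alt (X : Ctx T c k a) {p q : ℕ} (hp : 1 ≤ p) (hpq : p < q) : a p < a q :=
  lt_of_lt_of_le (X.asucc hp) (X.amono (by omega) (by omega))

lemma a_ge (X : Ctx T c k a) {p : ℕ} (hp : 1 ≤ p) : p ≤ a p := by
  induction p with
  | zero => omega
  | succ p ih =>
    rcases Nat.eq_or_lt_of_le hp with h | h
    · have := X.apos hp; omega
    · have h1 := X.asucc (n := p) (by omega); have := ih (by omega); omega

/-! ### The basic recurrence inequality `a (i+k+1) ≥ a (i+k) + a i` -/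

lemma T3 (X : Ctx T c k a) {i : ℕ} (hi : 1 ≤ i) : a (i + k) + a i ≤ a (i + k + 1) := by
  by_contra hlt
  push_neg at hlt
  have h1 : ¬ SlidDecomp (Sst T k) a (i + k) (a (i + k + 1)) := by
    have := X.anotD (n := i + k + 1) (by omega); simpa using this
  apply h1
  have hka : 1 ≤ k := by have := X.hkbig; omega
  have hmono := X.asucc (n := i + k) (by omega)
  have hy : 0 < a (i + k + 1) - a (i + k) := by omega
  have hy2 : a (i + k + 1) - a (i + k) < a i := by omega
  have hD := X.aallD (n := i) hi hy hy2
  have hIns := X.D_insert (m := i + k) hD (by omega)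
  have heq : a (i + k) + (a (i + k + 1) - a (i + k)) = a (i + k + 1) := by omega
  rwa [heq] at hIns

end Ctx

end SlidAux

namespace SlidAux
namespace Ctx
variable {T : Finset ℕ} {c k : ℕ} {a : ℕ → ℕ}

lemma card_le_one (X : Ctx T c k a) {L : Finset ℕ} {q : ℕ} (hleg : SlidLegal (Sst T k) L)
    (hL : L ⊆ Finset.Icc 1 q) (hq : q + c ≤ k) : L.card ≤ 1 := by
  by_contra h
  push_neg at h
  obtain ⟨i, hi, j, hj, hij⟩ := Finset.one_lt_card.mp h
  rcases Nat.lt_or_ge i j with hlt | hge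
  · have hgap := X.legal_gap hleg hi hj hlt
    have h1 := Finset.mem_Icc.1 (hL hi)
    have h2 := Finset.mem_Icc.1 (hL hj)
    omega
  · have hlt : j < i := by omega
    have hgap := X.legal_gap hleg hj hi hlt
    have h1 := Finset.mem_Icc.1 (hL hi)
    have h2 := Finset.mem_Icc.1 (hL hj)
    omega

/-- Legal sets in the base window have at most two elements. -/
lemma card_le_two (X : Ctx T c k a) {L : Finset ℕ} (hleg : SlidLegal (Sst T k) L)
    (hL : L ⊆ Finset.Icc 1 (k + 2*c + 1)) : L.card ≤ 2 := by
  by_contra h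
  push_neg at h
  obtain ⟨x, hx, y, hy, z, hz, hxy, hxz, hyz⟩ := Finset.two_lt_card.mp h
  -- order the three elements: get smallest and largest with a middle one
  have key : ∀ u v w : ℕ, u ∈ L → v ∈ L → w ∈ L → u < v → v < w → False := by
    intro u v w hu hv hw huv hvw
    have g1 := X.legal_gap hleg hu hv huv
    have g2 := X.legal_gap hleg hv hw hvw
    have h1 := Finset.mem_Icc.1 (hL hu)
    have h2 := Finset.mem_Icc.1 (hL hw)
    have hc1 := X.hc1
    have hk4 : 4*c + 2 ≤ k := by have := X.hkbig; nlinarith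
    omega
  rcases Nat.lt_trichotomy x y with h1 | h1 | h1 <;>
    rcases Nat.lt_trichotomy y z with h2 | h2 | h2 <;>
    rcases Nat.lt_trichotomy x z with h3 | h3 | h3 <;>
    first
      | omega
      | exact key _ _ _ hx hy hz (by omega) (by omega)
      | exact key _ _ _ hx hz hy (by omega) (by omega)
      | exact key _ _ _ hy hx hz (by omega) (by omega)
      | exact key _ _ _ hy hz hx (by omega) (by omega)
      | exact key _ _ _ hz hx hy (by omega) (by omega)
      | exact key _ _ _ hz hy hx (by omega) (by omega)

/-- On the initial linear range, `a j = j`. -/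
lemma baseLin (X : Ctx T c k a) {j : ℕ} (h1 : 1 ≤ j) (h2 : j + c ≤ k + 1) : a j = j := by
  induction j using Nat.strong_induction_on with
  | _ j IH =>
  refine IsLeast.unique (X.ha j h1) ?_
  constructor
  · refine ⟨by omega, ?_⟩
    rintro ⟨L, hL, hleg, hsum⟩
    have hcard := X.card_le_one hleg hL (by omega)
    interval_cases hc : L.card
    · rw [Finset.card_eq_zero.mp hc] at hsum
      simp at hsum; omega
    · obtain ⟨i, hi⟩ := Finset.card_eq_one.mp hc
      rw [hi] at hsum
      simp at hsum
      have him : i ∈ L := by rw [hi]; simp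
      have := Finset.mem_Icc.1 (hL him)
      rw [IH i (by omega) (by omega) (by omega)] at hsum
      omega
  · rintro x ⟨hx0, hxD⟩
    by_contra hxj
    push_neg at hxj
    apply hxD
    refine ⟨{x}, ?_, legal_singleton X.zero_not_S x, ?_⟩
    · simp only [Finset.singleton_subset_iff, Finset.mem_Icc]; omega
    · rw [Finset.sum_singleton, IH x (by omega) (by omega) (by omega)]

/-- Counting bound on the base window: `a j ≤ j + 9c² + 6c + 1`. -/
lemma base (X : Ctx T c k a) {j : ℕ} (h1 : 1 ≤ j) (h2 : j ≤ k + 2*c + 2) :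
    a j ≤ j + (9*c^2 + 6*c + 1) := by
  set F1 : Finset ℕ := (Finset.Icc 1 (j-1)).image a with hF1
  set F2 : Finset ℕ := ((Finset.Icc 1 (3*c+1)) ×ˢ (Finset.Icc (k-c) (k+2*c))).image
      (fun p => a p.1 + a (p.1 + p.2)) with hF2
  have hsub : Finset.Icc 1 (a j - 1) ⊆ F1 ∪ F2 := by
    intro x hx
    have hx' := Finset.mem_Icc.1 hx
    have haj := X.apos h1
    obtain ⟨L, hL, hleg, hsum⟩ := X.aallD (x := x) h1 (by omega) (by omega)
    have hL' : L ⊆ Finset.Icc 1 (k + 2*c + 1) :=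
      hL.trans (Finset.Icc_subset_Icc_right (by omega))
    have hcard := X.card_le_two hleg hL'
    interval_cases hc : L.card
    · rw [Finset.card_eq_zero.mp hc] at hsum; simp at hsum; omega
    · obtain ⟨i, hi⟩ := Finset.card_eq_one.mp hc
      rw [hi, Finset.sum_singleton] at hsum
      have him : i ∈ L := by rw [hi]; simp
      refine Finset.mem_union_left _ ?_
      rw [hF1]
      refine Finset.mem_image.2 ⟨i, ?_, hsum.symm⟩
      have := Finset.mem_Icc.1 (hL him); simp only [Finset.mem_Icc]; omega
    · obtain ⟨u, v, huv, hL2⟩ := Finset.card_eq_two.mp hc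
      have hu : u ∈ L := by rw [hL2]; simp
      have hv : v ∈ L := by rw [hL2]; simp
      rw [hL2, Finset.sum_pair huv] at hsum
      -- wlog u < v
      have main : ∀ p q : ℕ, p ∈ L → q ∈ L → p < q → x = a p + a q → x ∈ F1 ∪ F2 := by
        intro p q hp hq hpq hxpq
        have hgap := X.legal_gap hleg hp hq hpq
        have hp' := Finset.mem_Icc.1 (hL' hp)
        have hq' := Finset.mem_Icc.1 (hL' hq)
        have hpbound : p ≤ 3*c + 1 := by
          rcases X.legal_cases hleg hp hq hpq with hbig | ⟨t, ht, heq⟩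
          · omega
          · have := X.hTle t ht; omega
        refine Finset.mem_union_right _ ?_
        rw [hF2]
        refine Finset.mem_image.2 ⟨(p, q - p), ?_, ?_⟩
        · simp only [Finset.mem_product, Finset.mem_Icc]
          constructor
          · constructor <;> omega
          · omega
        · simp only
          have : p + (q - p) = q := by omega
          rw [this, hxpq]
      rcases Nat.lt_or_ge u v with h | h
      · exact main u v hu hv h hsum
      · exact main v u hv hu (by omega) (by omega)
  have hcardle := Finset.card_le_card hsub
  have h1c : (Finset.Icc 1 (a j - 1)).card = a j - 1 := by
    rw [Nat.card_Icc]; omega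
  have h2c : (F1 ∪ F2).card ≤ F1.card + F2.card := Finset.card_union_le _ _
  have h3c : F1.card ≤ j - 1 := by
    calc F1.card ≤ (Finset.Icc 1 (j-1)).card := Finset.card_image_le
    _ = j - 1 := by rw [Nat.card_Icc]; omega
  have h4c : F2.card ≤ (3*c+1) * (3*c+1) := by
    calc F2.card ≤ ((Finset.Icc 1 (3*c+1)) ×ˢ (Finset.Icc (k-c) (k+2*c))).card :=
          Finset.card_image_le
    _ = (3*c+1) * (3*c+1) := by
        rw [Finset.card_product, Nat.card_Icc, Nat.card_Icc]
        have hck : c ≤ k := by have := X.hkbig; nlinarith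
        congr 1 <;> omega
  have hfin : a j - 1 ≤ (j - 1) + (3*c+1) * (3*c+1) := by omega
  have hexp : (3*c+1) * (3*c+1) = 9*c^2 + 6*c + 1 := by ring
  have haj := X.apos h1
  omega

end Ctx
end SlidAux



namespace SlidAux
namespace Ctx
variable {T : Finset ℕ} {c k : ℕ} {a : ℕ → ℕ}

/-- Exact telescope of the recurrence. -/
lemma tele (X : Ctx T c k a) {N : ℕ}
    (HR : ∀ j, k + c < j → j < N → a (j + 1) = a j + a (j - k)) :
    ∀ p, k + c + 2 ≤ p → p ≤ N →
      a p = a (k + c + 2) + ∑ i ∈ Finset.Ico (c + 2) (p - k), a i := by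
  intro p hp
  induction p, hp using Nat.le_induction with
  | base =>
    intro _
    have : k + c + 2 - k = c + 2 := by omega
    rw [this]
    simp
  | succ p hp IH =>
    intro hpN
    have hrec := HR p (by omega) (by omega)
    have h1 : p + 1 - k = (p - k) + 1 := by omega
    have h2 : c + 2 ≤ p - k := by omega
    rw [hrec, IH (by omega), h1, Finset.sum_Ico_succ_top h2]
    ring

/-- Linear lower bound for block sums. -/
lemma sumline (X : Ctx T c k a) (z : ℕ) :
    (c + 2) + (c + 3) * z ≤ ∑ i ∈ Finset.Ico (c + 2) (z + c + 3), a i := by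
  have hsplit : ∑ i ∈ Finset.Ico (c + 2) (z + c + 3), a i
      = a (c + 2) + ∑ i ∈ Finset.Ico (c + 3) (z + c + 3), a i := by
    rw [Finset.sum_eq_sum_Ico_succ_bot (by omega)]
  rw [hsplit]
  have hb : c + 2 ≤ a (c + 2) := X.a_ge (by omega)
  have hs : (c + 3) * z ≤ ∑ i ∈ Finset.Ico (c + 3) (z + c + 3), a i := by
    have hcard : (Finset.Ico (c + 3) (z + c + 3)).card = z := by
      rw [Nat.card_Ico]; omega
    calc (c + 3) * z = (Finset.Ico (c + 3) (z + c + 3)).card • (c + 3) := by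
          rw [hcard, smul_eq_mul, Nat.mul_comm]
    _ ≤ ∑ i ∈ Finset.Ico (c + 3) (z + c + 3), a i := by
        apply Finset.card_nsmul_le_sum
        intro x hx
        have hx' := Finset.mem_Ico.1 hx
        exact le_trans (by omega) (X.a_ge (by omega))
  omega

/-- Growth lemma: factor `c+3` every `k - 2c` steps. -/
lemma Cp (X : Ctx T c k a) {N : ℕ}
    (HR : ∀ j, k + c < j → j < N → a (j + 1) = a j + a (j - k)) :
    ∀ p q, p ≤ N → p = q + (k - 2 * c) → 1 ≤ q → (c + 3) * a q ≤ a p := by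
  intro p
  induction p using Nat.strong_induction_on with
  | _ p IH =>
  intro q hpN hpq hq1
  have hc1 := X.hc1
  have hkb := X.hkbig
  rcases Nat.lt_or_ge (k + c + 2) p with hbig | hsmall
  swap
  · -- base region: p ≤ k + c + 2, q ≤ 3c + 2
    have hq : q ≤ 3 * c + 2 := by omega
    have haq : a q = q := X.baseLin hq1 (by nlinarith)
    have hap : p ≤ a p := X.a_ge (by omega)
    rw [haq]
    have h8 : (c + 3) * q ≤ (c + 3) * (3 * c + 2) := Nat.mul_le_mul_left _ hq
    have h9 : (c + 3) * (3 * c + 2) + 2 * c ≤ k := by nlinarith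
    omega
  rcases Nat.lt_or_ge (2 * k - c + 1) p with hstep | hmid
  · -- step case : p ≥ 2k - c + 2
    have e1 := HR (p - 1) (by omega) (by omega)
    have e2 := HR (q - 1) (by omega) (by omega)
    have r1 : p - 1 + 1 = p := by omega
    have r2 : q - 1 + 1 = q := by omega
    rw [r1] at e1
    rw [r2] at e2
    have ih1 : (c + 3) * a (q - 1) ≤ a (p - 1) :=
      IH (p - 1) (by omega) (q - 1) (by omega) (by omega) (by omega)
    have ih2 : (c + 3) * a (q - 1 - k) ≤ a (p - 1 - k) :=
      IH (p - 1 - k) (by omega) (q - 1 - k) (by omega) (by omega) (by omega)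
    rw [e1, e2]
    calc (c + 3) * (a (q - 1) + a (q - 1 - k))
        = (c + 3) * a (q - 1) + (c + 3) * a (q - 1 - k) := by ring
    _ ≤ a (p - 1) + a (p - 1 - k) := by omega
  · -- middle band : k + c + 3 ≤ p ≤ 2k - c + 1
    obtain ⟨z, hz⟩ : ∃ z, p - k = z + c + 3 := ⟨p - k - c - 3, by omega⟩
    have htel := X.tele HR p (by omega) (by omega)
    rw [hz] at htel
    have hsum := X.sumline z
    have hbase := X.a_ge (p := k + c + 2) (by omega)
    have hqup : a q ≤ q + (9 * c ^ 2 + 6 * c + 1) := X.base (by omega) (by omega)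
    have hqz : q = z + 3 * c + 3 := by omega
    have h5 : (c + 3) * a q ≤ (c + 3) * (z + 3 * c + 3 + (9 * c ^ 2 + 6 * c + 1)) := by
      apply Nat.mul_le_mul_left
      omega
    have h6 : (c + 3) * (z + 3 * c + 3 + (9 * c ^ 2 + 6 * c + 1))
        = (c + 3) * z + (9 * c ^ 3 + 36 * c ^ 2 + 31 * c + 12) := by ring
    have h7 : 9 * c ^ 3 + 36 * c ^ 2 + 31 * c + 12 ≤ k + 2 * c + 4 := by nlinarith
    omega

/-- Doubling: factor `2` every `k - c` steps. -/
lemma DBL (X : Ctx T c k a) {N : ℕ}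
    (HR : ∀ j, k + c < j → j < N → a (j + 1) = a j + a (j - k))
    {q e : ℕ} (he : e = q + (k - c)) (hq : 1 ≤ q) (heN : e ≤ N) :
    2 * a q ≤ a e := by
  have hc1 := X.hc1
  have hkb := X.hkbig
  have h1 : (c + 3) * a (q + c) ≤ a e := X.Cp HR e (q + c) heN (by omega) (by omega)
  have h2 : a q ≤ a (q + c) := X.amono hq (by omega)
  nlinarith [X.apos (n := q + c) (by omega)]

/-- Max legal sum bound: any legal sum supported in `[1, j]` is at most `2 a j`. -/
lemma Mlem (X : Ctx T c k a) {N : ℕ}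
    (HR : ∀ j, k + c < j → j < N → a (j + 1) = a j + a (j - k)) :
    ∀ j L, 1 ≤ j → j ≤ N → SlidLegal (Sst T k) L → L ⊆ Finset.Icc 1 j →
      ∑ ℓ ∈ L, a ℓ ≤ 2 * a j := by
  intro j
  induction j using Nat.strong_induction_on with
  | _ j IH =>
  intro L h1 hjN hleg hL
  rcases Finset.eq_empty_or_nonempty L with rfl | hne
  · simp
  have hc1 := X.hc1
  have hkb := X.hkbig
  set e := L.max' hne with he
  have heL : e ∈ L := L.max'_mem hne
  have heb := Finset.mem_Icc.1 (hL heL)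
  have hsum : ∑ ℓ ∈ L, a ℓ = a e + ∑ ℓ ∈ L.erase e, a ℓ := by
    rw [Finset.add_sum_erase _ _ heL]
  have hrest : L.erase e ⊆ Finset.Icc 1 (e - (k - c)) := by
    intro x hx
    have hxL := Finset.mem_of_mem_erase hx
    have hxe : x ≠ e := Finset.ne_of_mem_erase hx
    have hxlt : x < e := lt_of_le_of_ne (L.le_max' x hxL) hxe
    have hgap := X.legal_gap hleg hxL heL hxlt
    have hx1 := (Finset.mem_Icc.1 (hL hxL)).1
    simp only [Finset.mem_Icc]
    omega
  rcases Nat.lt_or_ge e (k - c + 1) with hsmall | hbig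
  · -- rest is empty
    have : L.erase e = ∅ := by
      refine Finset.eq_empty_of_forall_notMem (fun x hx => ?_)
      have := Finset.mem_Icc.1 (hrest hx)
      omega
    rw [hsum, this]
    simp only [Finset.sum_empty, Nat.add_zero]
    have := X.amono (p := e) (by omega) (le_trans heb.2 (le_refl j))
    omega
  · set q := e - (k - c) with hqdef
    have hq1 : 1 ≤ q := by omega
    have hrest2 : ∑ ℓ ∈ L.erase e, a ℓ ≤ 2 * a q :=
      IH q (by omega) _ hq1 (by omega) (legal_subset hleg (Finset.erase_subset _ _)) hrest
    have hdbl : 2 * a q ≤ a e := X.DBL HR (by omega) hq1 (by omega)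
    have hae : a e ≤ a j := X.amono (by omega) heb.2
    omega

end Ctx
end SlidAux


namespace SlidAux
namespace Ctx
variable {T : Finset ℕ} {c k : ℕ} {a : ℕ → ℕ}

/-- additive growth -/
lemma aadd (X : Ctx T c k a) {p : ℕ} (hp : 1 ≤ p) (r : ℕ) : a p + r ≤ a (p + r) := by
  induction r with
  | zero => simp
  | succ r ih =>
    have h1 := X.asucc (n := p + r) (by omega)
    have h2 : p + (r + 1) = (p + r) + 1 := by omega
    rw [h2]
    omega

/-- upper bound on short runs of the recurrence -/
lemma stepup (X : Ctx T c k a) {N : ℕ}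
    (HR : ∀ j, k + c < j → j < N → a (j + 1) = a j + a (j - k)) :
    ∀ e q, k + c + 1 ≤ q → q + e ≤ N → a (q + e) ≤ a q + e * a (q + e - 1 - k) := by
  intro e
  induction e with
  | zero => intro q _ _; simp
  | succ e ih =>
    intro q hq hqN
    have hc1 := X.hc1
    have hkb := X.hkbig
    have hlt1 : k + c < q + e := by omega
    have hlt2 : q + e < N := by omega
    have hrec := HR (q + e) hlt1 hlt2
    have h1 : q + (e + 1) = (q + e) + 1 := by omega
    have h2 : a (q + e - 1 - k) ≤ a (q + e - k) := X.amono (by omega) (by omega)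
    have h3 := ih q hq (by omega)
    rw [h1, hrec]
    have h4 : q + e + 1 - 1 - k = q + e - k := by omega
    rw [h4]
    have : e * a (q + e - 1 - k) ≤ e * a (q + e - k) := Nat.mul_le_mul_left _ h2
    nlinarith

/-- THE MAIN STEP -/
lemma step (X : Ctx T c k a) {n : ℕ}
    (HR : ∀ j, k + c < j → j < n → a (j + 1) = a j + a (j - k))
    (hn : k + c < n) : a (n + 1) = a n + a (n - k) := by
  have hc1 := X.hc1
  have hkb := X.hkbig
  set v := a n + a (n - k) with hv
  clear_value v
  have hnk1 : c + 1 ≤ n - k := by omega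
  have hvpos : 0 < v := by
    have := X.apos (n := n) (by omega); omega
  -- (2) v has no decomposition with indices ≤ n
  have noD : ¬ SlidDecomp (Sst T k) a n v := by
    rintro ⟨L, hL, hleg, hsumL⟩
    have hne : L.Nonempty := by
      rcases Finset.eq_empty_or_nonempty L with rfl | h
      · simp at hsumL; omega
      · exact h
    set m := L.max' hne with hm
    clear_value m
    have hmL : m ∈ L := by rw [hm]; exact L.max'_mem hne
    have hmIcc := Finset.mem_Icc.1 (hL hmL)
    set rest := L.erase m with hrest
    have hsum' : a m + ∑ ℓ ∈ rest, a ℓ = v := by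
      rw [hrest, Finset.add_sum_erase _ _ hmL, ← hsumL]
    have hrest_mem : ∀ x ∈ rest, x < m ∧ 1 ≤ x := by
      intro x hx
      rw [hrest] at hx
      have hxL := Finset.mem_of_mem_erase hx
      have hxe : x ≠ m := Finset.ne_of_mem_erase hx
      have h2 := Finset.mem_Icc.1 (hL hxL)
      have h3 := L.le_max' x hxL
      rw [← hm] at h3
      exact ⟨lt_of_le_of_ne h3 hxe, h2.1⟩
    have hrest_gap : ∀ x ∈ rest, x + k ≤ m + c := by
      intro x hx
      have hxL := Finset.mem_of_mem_erase hx
      have h1 := (hrest_mem x hx).1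
      have := X.legal_gap hleg hxL hmL h1
      omega
    have hrest_class : ∀ x ∈ rest, x + k < m ∨ ∃ t ∈ T, x + k = m + t := by
      intro x hx
      exact X.legal_cases hleg (Finset.mem_of_mem_erase hx) hmL (hrest_mem x hx).1
    rcases Nat.eq_or_lt_of_le hmIcc.2 with hmn | hmlt
    · -- CASE m = n
      have hamn : a m = a n := by rw [hmn]
      have hsrest : ∑ ℓ ∈ rest, a ℓ = a (n - k) := by omega
      by_cases hf : ∃ x ∈ rest, ¬ (x + k < m)
      · obtain ⟨x, hxr, hxf⟩ := hf
        obtain ⟨t, ht, hxt⟩ := (hrest_class x hxr).resolve_left hxf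
        have ht1 := X.hTpos t ht
        have htc := X.hTle t ht
        have hax : a (n - k) < a x := X.alt (by omega) (by omega)
        have hle : a x ≤ ∑ ℓ ∈ rest, a ℓ :=
          Finset.single_le_sum (fun i _ => Nat.zero_le _) hxr
        omega
      · push_neg at hf
        have hsub : rest ⊆ Finset.Icc 1 (n - k - 1) := by
          intro x hx
          have h1 := hrest_mem x hx
          have h2 := hf x hx
          simp only [Finset.mem_Icc]
          omega
        exact X.anotD (n := n - k) (by omega)
          ⟨rest, hsub, legal_subset hleg (Finset.erase_subset _ _), hsrest.symm⟩
    · -- CASE m < n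
      rcases le_or_gt m k with hlow | hmk
      · -- CASE m ≤ k
        have hrest_hi : rest ⊆ Finset.Icc 1 c := by
          intro x hx
          have h1 := hrest_gap x hx
          have h2 := hrest_mem x hx
          simp only [Finset.mem_Icc]
          omega
        have hcard := X.card_le_one (legal_subset hleg (Finset.erase_subset _ _))
          hrest_hi (by omega)
        have hsr : ∑ ℓ ∈ rest, a ℓ ≤ c := by
          interval_cases hcc : rest.card
          · rw [Finset.card_eq_zero.mp hcc]; simp
          · obtain ⟨x, hx⟩ := Finset.card_eq_one.mp hcc
            have hxr : x ∈ rest := by rw [hx]; simp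
            have hxb := Finset.mem_Icc.1 (hrest_hi hxr)
            rw [hx, Finset.sum_singleton, X.baseLin hxb.1 (by omega)]
            omega
        have h1 : a m ≤ a k := X.amono (by omega) hlow
        have h2 : a k + (c + 1) ≤ a (k + c + 1) := X.aadd (by omega) (c + 1)
        have h3 : a (k + c + 1) ≤ a n := X.amono (by omega) (by omega)
        have h4 := X.apos (n := n - k) (by omega)
        omega
      rcases le_or_gt (m + c + 1) n with heasy | hhard
      · -- EASY CASE : k+1 ≤ m, m + c + 1 ≤ n
        have hT3a : a m + a (m - k) ≤ a (m + 1) := by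
          have h := X.T3 (i := m - k) (by omega)
          rw [show m - k + k = m from by omega] at h
          exact h
        have hT3b : a (m + c) + a (m - k + c) ≤ a (m + c + 1) := by
          have h := X.T3 (i := m - k + c) (by omega)
          rw [show m - k + c + k = m + c from by omega] at h
          exact h
        have hmono1 : a (m + 1) ≤ a (m + c) := X.amono (by omega) (by omega)
        have hmono2 : a (m + c + 1) ≤ a n := X.amono (by omega) heasy
        have hposnk := X.apos (n := n - k) (by omega)
        have hrsub : rest ⊆ Finset.Icc 1 (m - k + c) := by
          intro x hx
          have h1 := hrest_gap x hx
          have h2 := hrest_mem x hx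
          simp only [Finset.mem_Icc]
          omega
        rcases le_or_gt (m - k + c) (k - c) with hsm | hbg
        · have hcard := X.card_le_one (legal_subset hleg (Finset.erase_subset _ _))
            hrsub (by omega)
          have hsr : ∑ ℓ ∈ rest, a ℓ ≤ a (m - k + c) := by
            interval_cases hcc : rest.card
            · rw [Finset.card_eq_zero.mp hcc]; simp
            · obtain ⟨x, hx⟩ := Finset.card_eq_one.mp hcc
              have hxr : x ∈ rest := by rw [hx]; simp
              have hxb := Finset.mem_Icc.1 (hrsub hxr)
              rw [hx, Finset.sum_singleton]
              exact X.amono hxb.1 hxb.2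
          omega
        · rcases Finset.eq_empty_or_nonempty rest with hre | hrne
          · rw [hre] at hsum'
            simp only [Finset.sum_empty, Nat.add_zero] at hsum'
            have : a m < a n := X.alt (by omega) hmlt
            omega
          · set e2 := rest.max' hrne with he2
            have he2r : e2 ∈ rest := rest.max'_mem hrne
            have he2b := Finset.mem_Icc.1 (hrsub he2r)
            have he2L : e2 ∈ L := Finset.mem_of_mem_erase he2r
            have hsum2 : a e2 + ∑ ℓ ∈ rest.erase e2, a ℓ = ∑ ℓ ∈ rest, a ℓ :=
              Finset.add_sum_erase _ _ he2r
            have hr2sub : rest.erase e2 ⊆ Finset.Icc 1 (e2 - (k - c)) := by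
              intro y hy
              have hyr : y ∈ rest := Finset.mem_of_mem_erase hy
              have hyL : y ∈ L := Finset.mem_of_mem_erase hyr
              have hye : y ≠ e2 := Finset.ne_of_mem_erase hy
              have hylt : y < e2 := lt_of_le_of_ne (rest.le_max' y hyr) hye
              have hgap := X.legal_gap hleg hyL he2L hylt
              have := (hrest_mem y hyr).2
              simp only [Finset.mem_Icc]
              omega
            rcases le_or_gt e2 (k - c) with h2sm | h2bg
            · have hr2e : rest.erase e2 = ∅ := by
                refine Finset.eq_empty_of_forall_notMem (fun y hy => ?_)
                have := Finset.mem_Icc.1 (hr2sub hy)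
                omega
              rw [hr2e] at hsum2
              simp only [Finset.sum_empty, Nat.add_zero] at hsum2
              have : a e2 ≤ a (m - k + c) := X.amono (by omega) he2b.2
              omega
            · have hq2 : 1 ≤ e2 - (k - c) := by omega
              have hMl := X.Mlem HR (e2 - (k - c)) (rest.erase e2) hq2 (by omega)
                (legal_subset hleg ((Finset.erase_subset _ _).trans (Finset.erase_subset _ _)))
                hr2sub
              have hq2m : a (e2 - (k - c)) ≤ a (m + 2 * c - 2 * k) :=
                X.amono hq2 (by omega)
              have hCp : (c + 3) * a (m + 2 * c - 2 * k) ≤ a (m - k) :=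
                X.Cp HR (m - k) (m + 2 * c - 2 * k) (by omega) (by omega) (by omega)
              have he2m : a e2 ≤ a (m - k + c) := X.amono (by omega) he2b.2
              have hpos2 := X.apos (n := m + 2 * c - 2 * k) (by omega)
              have hmul : 2 * a (m + 2 * c - 2 * k) + (c + 1) * a (m + 2 * c - 2 * k)
                  = (c + 3) * a (m + 2 * c - 2 * k) := by ring
              omega
      · -- HARD ZONE : n - c ≤ m ≤ n - 1
        rcases le_or_gt m (k + c) with hband | hmain
        · -- band : m ≤ k + c (and n - c ≤ m < n)
          have hr2c : rest ⊆ Finset.Icc 1 (2 * c) := by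
            intro x hx
            have h1 := hrest_mem x hx
            rcases hrest_class x hx with hbig | ⟨t, ht, hxt⟩
            · simp only [Finset.mem_Icc]; omega
            · have := X.hTle t ht
              simp only [Finset.mem_Icc]; omega
          have hcard := X.card_le_one (legal_subset hleg (Finset.erase_subset _ _))
            hr2c (by omega)
          have hank : a (n - k) = n - k := X.baseLin (by omega) (by omega)
          have hamn : a m < a n := X.alt (by omega) hmlt
          interval_cases hcc : rest.card
          · rw [Finset.card_eq_zero.mp hcc] at hsum'
            simp only [Finset.sum_empty, Nat.add_zero] at hsum'
            omega
          · obtain ⟨x, hx⟩ := Finset.card_eq_one.mp hcc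
            have hxr : x ∈ rest := by rw [hx]; simp
            have hxb := Finset.mem_Icc.1 (hr2c hxr)
            have hax : a x = x := X.baseLin hxb.1 (by omega)
            rw [hx, Finset.sum_singleton] at hsum'
            rcases hrest_class x hxr with hbig | ⟨t, ht, hxt⟩
            · -- x + k < m : forces a n < a m
              omega
            · have ht1 := X.hTpos t ht
              have htc := X.hTle t ht
              by_cases htd : t ≤ n - m
              · omega
              · -- w-trick with w = t - (n - m)
                have hamk : a (m - k) = m - k := X.baseLin (by omega) (by omega)
                have hwpos : 0 < a n - a m := by omega
                have hwlt : a n - a m < a (m - k) := by omega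
                have hD := X.aallD (n := m - k) (by omega) hwpos hwlt
                have hIns := X.D_insert (m := m) hD (by omega)
                have heq2 : a m + (a n - a m) = a n := by omega
                rw [heq2] at hIns
                exact X.anotD (n := n) (by omega) (D_mono hIns (by omega))
        · -- main hard zone : m ≥ k + c + 1, n - c ≤ m < n
          by_cases hf : ∃ x ∈ rest, ¬ (x + k < m)
          · -- H1 : a fringe companion exists
            obtain ⟨x0, hx0r, hx0f⟩ := hf
            obtain ⟨t, ht, hx0t⟩ := (hrest_class x0 hx0r).resolve_left hx0f
            have ht1 := X.hTpos t ht
            have htc := X.hTle t ht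
            have hx0L : x0 ∈ L := Finset.mem_of_mem_erase hx0r
            set Lo := rest.erase x0 with hLodef
            have hsum'' : a m + a x0 + ∑ ℓ ∈ Lo, a ℓ = v := by
              have h := Finset.add_sum_erase _ a hx0r
              rw [hLodef]
              omega
            have hLoleg : SlidLegal (Sst T k) Lo :=
              legal_subset hleg ((Finset.erase_subset _ _).trans (Finset.erase_subset _ _))
            have hLo_lt : ∀ y ∈ Lo, y < x0 := by
              intro y hy
              have hyr : y ∈ rest := Finset.mem_of_mem_erase hy
              have hyL : y ∈ L := Finset.mem_of_mem_erase hyr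
              have hye : y ≠ x0 := Finset.ne_of_mem_erase hy
              by_contra hge
              push_neg at hge
              have hlt : x0 < y := by omega
              have hgap := X.legal_gap hleg hx0L hyL hlt
              have hgy := hrest_gap y hyr
              omega
            have hLo_sub : Lo ⊆ Finset.Icc 1 (m + t + c - 2 * k) := by
              intro y hy
              have hyr : y ∈ rest := Finset.mem_of_mem_erase hy
              have hyL : y ∈ L := Finset.mem_of_mem_erase hyr
              have hgap := X.legal_gap hleg hyL hx0L (hLo_lt y hy)
              have := (hrest_mem y hyr).2
              simp only [Finset.mem_Icc]
              omega
            by_cases htd : t ≤ n - m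
            · -- fringe inside the window
              by_cases hcorner : t = 1 ∧ n - m = 1
              · -- corner t = d = 1
                obtain ⟨ht1', hd1'⟩ := hcorner
                have hrec := HR (n - 1) (by omega) (by omega)
                rw [show n - 1 + 1 = n from by omega] at hrec
                have hmn1 : m = n - 1 := by omega
                rw [← hmn1] at hrec
                have hx0v : x0 = n - k := by omega
                have hLo_sub' : Lo ⊆ Finset.Icc 1 (m - k - 1) := by
                  intro y hy
                  have := Finset.mem_Icc.1 (hLo_sub hy)
                  simp only [Finset.mem_Icc]
                  omega
                have hsl : a (m - k) = ∑ ℓ ∈ Lo, a ℓ := by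
                  rw [hx0v] at hsum''
                  omega
                exact X.anotD (n := m - k) (by omega) ⟨Lo, hLo_sub', hLoleg, hsl⟩
              · -- t < d, or t = d ≥ 2 : size contradiction
                have hT3a : a m + a (m - k) ≤ a (m + 1) := by
                  have h := X.T3 (i := m - k) (by omega)
                  rw [show m - k + k = m from by omega] at h
                  exact h
                have hm1n : a (m + 1) ≤ a n := X.amono (by omega) (by omega)
                have hlow : a (m - k) + 1 ≤ ∑ ℓ ∈ Lo, a ℓ := by
                  rcases lt_or_eq_of_le htd with hlt' | heq'
                  · -- t < d
                    have hax0 : a x0 < a (n - k) := X.alt (by omega) (by omega)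
                    omega
                  · -- t = d ≥ 2
                    have hd2 : 2 ≤ n - m := by omega
                    have hT3c : a (m + 1) + a (m - k + 1) ≤ a (m + 2) := by
                      have h := X.T3 (i := m - k + 1) (by omega)
                      rw [show m - k + 1 + k = m + 1 from by omega] at h
                      have : m + 1 + 1 = m + 2 := by omega
                      rw [this] at h
                      exact h
                    have hm2n : a (m + 2) ≤ a n := X.amono (by omega) (by omega)
                    have hax0 : a x0 = a (n - k) := by rw [show x0 = n - k from by omega]
                    have hp1 := X.apos (n := m - k + 1) (by omega)
                    omega
                rcases le_or_gt (m + t + c) (2 * k) with hLoe | hLone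
                · have hLoempty : Lo = ∅ := by
                    refine Finset.eq_empty_of_forall_notMem (fun y hy => ?_)
                    have := Finset.mem_Icc.1 (hLo_sub hy)
                    omega
                  rw [hLoempty] at hlow
                  simp at hlow
                · have hjLo : 1 ≤ m + t + c - 2 * k := by omega
                  have hMl := X.Mlem HR (m + t + c - 2 * k) Lo hjLo (by omega) hLoleg hLo_sub
                  have hq2m : a (m + t + c - 2 * k) ≤ a (m + 2 * c - 2 * k) :=
                    X.amono hjLo (by omega)
                  have hCp : (c + 3) * a (m + 2 * c - 2 * k) ≤ a (m - k) :=
                    X.Cp HR (m - k) (m + 2 * c - 2 * k) (by omega) (by omega) (by omega)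
                  have hpos2 := X.apos (n := m + 2 * c - 2 * k) (by omega)
                  have hmul : 2 * a (m + 2 * c - 2 * k) + (c + 1) * a (m + 2 * c - 2 * k)
                      = (c + 3) * a (m + 2 * c - 2 * k) := by ring
                  omega
            · -- t > d : w-trick
              push_neg at htd
              have hwpos : 0 < a n - a m := by
                have := X.alt (p := m) (by omega) hmlt; omega
              have heqw : a m + (a n - a m) = a n := by
                have := X.alt (p := m) (by omega) hmlt; omega
              have htrick : a n - a m < a (m - k) → False := by
                intro hwlt
                have hD := X.aallD (n := m - k) (by omega) hwpos hwlt
                have hIns := X.D_insert (m := m) hD (by omega)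
                rw [heqw] at hIns
                exact X.anotD (n := n) (by omega) (D_mono hIns (by omega))
              apply htrick
              rcases le_or_gt (2 * k + c + 1) n with hR1 | hR2
              · -- regime R1 : n ≥ 2k + c + 1
                have hsu := X.stepup HR (t - (n - m)) (n - k) (by omega) (by omega)
                rw [show n - k + (t - (n - m)) = x0 from by omega] at hsu
                have hidx : 1 ≤ x0 - 1 - k := by omega
                have hstep1 : a (x0 - 1 - k) ≤ a (m + 2 * c - 2 * k) :=
                  X.amono hidx (by omega)
                have hstep2 : (t - (n - m)) * a (x0 - 1 - k)
                    ≤ c * a (m + 2 * c - 2 * k) :=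
                  Nat.mul_le_mul (by omega) hstep1
                have hjLo : 1 ≤ m + t + c - 2 * k := by omega
                have hMl := X.Mlem HR (m + t + c - 2 * k) Lo hjLo (by omega) hLoleg hLo_sub
                have hq2m : a (m + t + c - 2 * k) ≤ a (m + 2 * c - 2 * k) :=
                  X.amono hjLo (by omega)
                have hCp : (c + 3) * a (m + 2 * c - 2 * k) ≤ a (m - k) :=
                  X.Cp HR (m - k) (m + 2 * c - 2 * k) (by omega) (by omega) (by omega)
                have hpos2 := X.apos (n := m + 2 * c - 2 * k) (by omega)
                have hmul : c * a (m + 2 * c - 2 * k) + 2 * a (m + 2 * c - 2 * k)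
                    + a (m + 2 * c - 2 * k) = (c + 3) * a (m + 2 * c - 2 * k) := by ring
                omega
              · -- regime R2 : n ≤ 2k + c
                rcases le_or_gt (m - k) (9 * c ^ 2 + 10 * c + 2) with hTiny | hMid
                · -- tiny : everything linear, Lo empty
                  have hx0lin : a x0 = x0 := X.baseLin (by omega) (by omega)
                  have hnklin : a (n - k) = n - k := X.baseLin (by omega) (by omega)
                  have hamk : m - k ≤ a (m - k) := X.a_ge (by omega)
                  have hLoempty : Lo = ∅ := by
                    refine Finset.eq_empty_of_forall_notMem (fun y hy => ?_)
                    have h1 := Finset.mem_Icc.1 (hLo_sub hy)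
                    have : m + t + c ≤ 2 * k := by omega
                    omega
                  rw [hLoempty] at hsum''
                  simp only [Finset.sum_empty, Nat.add_zero] at hsum''
                  omega
                · -- mid : counting bounds
                  have hx0up : a x0 ≤ x0 + (9 * c ^ 2 + 6 * c + 1) :=
                    X.base (by omega) (by omega)
                  have hnkge : n - k ≤ a (n - k) := X.a_ge (by omega)
                  have hamkge : m - k ≤ a (m - k) := X.a_ge (by omega)
                  have hLo3c : Lo ⊆ Finset.Icc 1 (3 * c) := by
                    intro y hy
                    have := Finset.mem_Icc.1 (hLo_sub hy)
                    simp only [Finset.mem_Icc]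
                    omega
                  have hcardLo := X.card_le_one hLoleg hLo3c (by omega)
                  have hsLo : ∑ ℓ ∈ Lo, a ℓ ≤ 3 * c := by
                    interval_cases hcc : Lo.card
                    · rw [Finset.card_eq_zero.mp hcc]; simp
                    · obtain ⟨y, hy⟩ := Finset.card_eq_one.mp hcc
                      have hyr : y ∈ Lo := by rw [hy]; simp
                      have hyb := Finset.mem_Icc.1 (hLo3c hyr)
                      rw [hy, Finset.sum_singleton, X.baseLin hyb.1 (by omega)]
                      omega
                  omega
          · -- H0 : no fringe companion
            push_neg at hf
            have hsub : rest ⊆ Finset.Icc 1 (m - k - 1) := by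
              intro x hx
              have h1 := hrest_mem x hx
              have h2 := hf x hx
              simp only [Finset.mem_Icc]
              omega
            have hT3a : a m + a (m - k) ≤ a (m + 1) := by
              have h := X.T3 (i := m - k) (by omega)
              rw [show m - k + k = m from by omega] at h
              exact h
            have hm1n : a (m + 1) ≤ a n := X.amono (by omega) (by omega)
            have hnk : a (m - k + 1) ≤ a (n - k) := X.amono (by omega) (by omega)
            have hup := X.Mlem HR (m - k - 1) rest (by omega) (by omega)
              (legal_subset hleg (Finset.erase_subset _ _)) hsub
            have h1 : a (m - k - 1) < a (m - k) := X.alt (by omega) (by omega)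
            have h2 : a (m - k - 1) < a (m - k + 1) := X.alt (by omega) (by omega)
            omega
  -- (1) everything below v is decomposable, conclude
  have hleast : IsLeast {x | 0 < x ∧ ¬ SlidDecomp (Sst T k) a n x} v := by
    constructor
    · exact ⟨hvpos, noD⟩
    · rintro x ⟨hx0, hxD⟩
      by_contra hlt
      push_neg at hlt
      apply hxD
      rcases Nat.lt_trichotomy x (a n) with h | h | h
      · exact D_mono (X.aallD (by omega) hx0 h) (by omega)
      · rw [h]; exact X.D_single (by omega)
      · have hy1 : 0 < x - a n := by omega
        have hy2 : x - a n < a (n - k) := by omega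
        have hD := X.aallD (n := n - k) (by omega) hy1 hy2
        have hIns := X.D_insert (m := n) hD (by omega)
        have : a n + (x - a n) = x := by omega
        rwa [this] at hIns
  have hIs := X.ha (n + 1) (by omega)
  simp only [Nat.add_sub_cancel] at hIs
  exact hIs.unique hleast

end Ctx
end SlidAux

theorem slid_fixed_fringes_recurrence
    (T : Finset ℕ) (hTne : T.Nonempty) (hTpos : ∀ t ∈ T, 0 < t)
    (c : ℕ) (hc : c = T.max' hTne) :
    ∃ K : ℕ, ∀ k, K ≤ k → ∀ a : ℕ → ℕ,
      IsSlidSeq (Set.Icc 1 k \ ((fun t => k - t) '' ↑T)) a →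
      ∀ n, k + c < n → a (n + 1) = a n + a (n - k) := by
  refine ⟨100 * (c + 1) ^ 3, ?_⟩
  intro k hk a ha
  have X : SlidAux.Ctx T c k a :=
    { hTpos := hTpos
      hTle := fun t ht => hc ▸ T.le_max' t ht
      hcT := hc ▸ T.max'_mem hTne
      hk := hk
      ha := ha }
  intro n
  induction n using Nat.strong_induction_on with
  | _ n IH =>
  intro hn
  exact X.step (fun j hj1 hj2 => IH j hj2 hj1) hn
end

section
/- The {1}-LID sequence (a_n)_{n≥1} satisfies a_n = F_n for all positive integers n, where F_1 = 1, F_2 = 2, and F_n = F_{n−1} + F_{n−2} for n ≥ 3. -/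
section Aux

variable (F : ℕ → ℕ) (hF1 : F 1 = 1) (hF2 : F 2 = 2)
  (hFrec : ∀ n, 3 ≤ n → F n = F (n - 1) + F (n - 2))

include hF1 hF2 hFrec

lemma slid_fib_pos : ∀ n, 1 ≤ n → 1 ≤ F n := by
  intro n
  induction n using Nat.strong_induction_on with
  | _ n ih =>
    intro hn
    match n, hn with
    | 1, _ => omega
    | 2, _ => omega
    | (k+3), _ =>
      have hr := hFrec (k+3) (by omega)
      have h1 : 1 ≤ F (k+2) := ih (k+2) (by omega) (by omega)
      simp only [show k+3-1 = k+2 from rfl, show k+3-2 = k+1 from rfl] at hr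
      omega

lemma slid_key : ∀ n : ℕ,
    (∀ L : Finset ℕ, L ⊆ Finset.Icc 1 n → SlidLegal {1} L →
      ∑ ℓ ∈ L, F ℓ + 1 ≤ F (n+1)) ∧
    (∀ m : ℕ, m + 1 ≤ F (n+1) →
      ∃ L : Finset ℕ, L ⊆ Finset.Icc 1 n ∧ SlidLegal {1} L ∧ m = ∑ ℓ ∈ L, F ℓ) := by
  intro n
  induction n using Nat.strong_induction_on with
  | _ n ih =>
    match n with
    | 0 =>
      constructor
      · intro L hL _
        have hL0 : L = ∅ := by
          have : Finset.Icc 1 0 = (∅ : Finset ℕ) := by simp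
          rw [this] at hL
          exact Finset.subset_empty.mp hL
        have h1 : F (0+1) = 1 := hF1
        rw [hL0, Finset.sum_empty]
        omega
      · intro m hm
        have h1 : F (0+1) = 1 := hF1
        rw [h1] at hm
        refine ⟨∅, by simp, ?_, by simp; omega⟩
        intro i hi; simp at hi
    | 1 =>
      constructor
      · intro L hL _
        have hsub : L ⊆ {1} := by
          intro x hx
          have := hL hx
          simp only [Finset.mem_Icc] at this
          simp; omega
        have h1 : F (1+1) = 2 := hF2
        rcases Finset.subset_singleton_iff.mp hsub with h | h <;>
          simp [h, hF1, h1]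
      · intro m hm
        have h2 : F (1+1) = 2 := hF2
        rw [h2] at hm
        rcases Nat.le_one_iff_eq_zero_or_eq_one.mp (by omega : m ≤ 1) with rfl | rfl
        · refine ⟨∅, by simp, ?_, by simp⟩
          intro i hi; simp at hi
        · refine ⟨{1}, by simp, ?_, by simp [hF1]⟩
          intro i hi j hj
          simp only [Finset.mem_singleton] at hi hj
          subst hi; subst hj
          simp
    | (k+2) =>
      have hrec0 := hFrec (k+3) (by omega)
      simp only [show k+3-1 = k+2 from rfl, show k+3-2 = k+1 from rfl] at hrec0
      have hrec : F (k+2+1) = F (k+2) + F (k+1) := hrec0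
      constructor
      · intro L hL hleg
        by_cases hn : (k+2) ∈ L
        · have h1 : (k+1) ∉ L := by
            intro h
            have := hleg (k+2) hn (k+1) h
            apply this
            simp only [Set.mem_singleton_iff]
            omega
          set L' := L.erase (k+2) with hL'def
          have hsub : L' ⊆ Finset.Icc 1 k := by
            intro x hx
            have hx1 : x ∈ L := Finset.mem_of_mem_erase hx
            have hx2 : x ≠ k+2 := Finset.ne_of_mem_erase hx
            have hx3 : x ≠ k+1 := by rintro rfl; exact h1 hx1
            have := hL hx1
            simp only [Finset.mem_Icc] at this ⊢
            omega
          have hleg' : SlidLegal {1} L' := by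
            intro i hi j hj
            exact hleg i (Finset.mem_of_mem_erase hi) j (Finset.mem_of_mem_erase hj)
          have hsum : ∑ ℓ ∈ L', F ℓ + F (k+2) = ∑ ℓ ∈ L, F ℓ :=
            Finset.sum_erase_add L F hn
          have hIH : ∑ ℓ ∈ L', F ℓ + 1 ≤ F (k+1) := (ih k (by omega)).1 L' hsub hleg'
          omega
        · have hsub : L ⊆ Finset.Icc 1 (k+1) := by
            intro x hx
            have hx2 : x ≠ k+2 := by rintro rfl; exact hn hx
            have := hL hx
            simp only [Finset.mem_Icc] at this ⊢
            omega
          have hIH : ∑ ℓ ∈ L, F ℓ + 1 ≤ F (k+2) := (ih (k+1) (by omega)).1 L hsub hleg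
          have hpos : 1 ≤ F (k+1) := slid_fib_pos F hF1 hF2 hFrec (k+1) (by omega)
          omega
      · intro m hm
        by_cases h : m + 1 ≤ F (k+2)
        · obtain ⟨L, hL, hleg, hsum⟩ := (ih (k+1) (by omega)).2 m h
          exact ⟨L, hL.trans (Finset.Icc_subset_Icc_right (by omega)), hleg, hsum⟩
        · have hle : F (k+2) ≤ m := by omega
          have h2 : (m - F (k+2)) + 1 ≤ F (k+1) := by omega
          obtain ⟨L', hL', hleg', hsum'⟩ := (ih k (by omega)).2 (m - F (k+2)) h2
          have hnot : (k+2) ∉ L' := by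
            intro h
            have := hL' h
            simp only [Finset.mem_Icc] at this
            omega
          refine ⟨insert (k+2) L', ?_, ?_, ?_⟩
          · intro x hx
            rcases Finset.mem_insert.mp hx with rfl | hx'
            · simp only [Finset.mem_Icc]; omega
            · have := hL' hx'
              simp only [Finset.mem_Icc] at this ⊢
              omega
          · intro i hi j hj
            have hbound : ∀ x ∈ L', x ≤ k := by
              intro x hx
              have := hL' hx
              simp only [Finset.mem_Icc] at this
              omega
            rcases Finset.mem_insert.mp hi with rfl | hi' <;>
              rcases Finset.mem_insert.mp hj with h' | hj'
            · subst h'; simp only [Set.mem_singleton_iff]; omega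
            · have := hbound j hj'
              simp only [Set.mem_singleton_iff]; omega
            · subst h'
              have := hbound i hi'
              simp only [Set.mem_singleton_iff]; omega
            · exact hleg' i hi' j hj'
          · rw [Finset.sum_insert hnot, ← hsum']
            omega

end Aux

theorem one_slid_is_fibonacci
    (F : ℕ → ℕ) (hF1 : F 1 = 1) (hF2 : F 2 = 2)
    (hFrec : ∀ n, 3 ≤ n → F n = F (n - 1) + F (n - 2))
    (a : ℕ → ℕ) (ha : IsSlidSeq {1} a) :
    ∀ n, 1 ≤ n → a n = F n := by
  intro n
  induction n using Nat.strong_induction_on with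
  | _ n ih =>
    intro hn
    have hkey := slid_key F hF1 hF2 hFrec (n-1)
    have hn1 : n - 1 + 1 = n := by omega
    rw [hn1] at hkey
    have hFn : IsLeast {m | 0 < m ∧ ¬ SlidDecomp {1} a (n - 1) m} (F n) := by
      constructor
      · refine ⟨slid_fib_pos F hF1 hF2 hFrec n hn, ?_⟩
        rintro ⟨L, hL, hleg, hsum⟩
        have hsum' : ∑ ℓ ∈ L, a ℓ = ∑ ℓ ∈ L, F ℓ := by
          refine Finset.sum_congr rfl fun ℓ hℓ => ?_
          have := hL hℓ
          simp only [Finset.mem_Icc] at this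
          exact ih ℓ (by omega) (by omega)
        have := hkey.1 L hL hleg
        omega
      · intro m hm
        simp only [Set.mem_setOf_eq] at hm
        by_contra hc
        push_neg at hc
        have hm1 : m + 1 ≤ F n := by omega
        obtain ⟨L, hL, hleg, hsum⟩ := hkey.2 m hm1
        apply hm.2
        refine ⟨L, hL, hleg, ?_⟩
        rw [hsum]
        refine Finset.sum_congr rfl fun ℓ hℓ => ?_
        have := hL hℓ
        simp only [Finset.mem_Icc] at this
        exact (ih ℓ (by omega) (by omega)).symm
    exact (ha n hn).unique hFn
end

section
/- Let (a_n)_{n≥1} be the {2}-LID sequence. Then a_1 = 1, a_2 = 2, a_3 = 4, and for all integers n ≥ 3 one has a_{n+1} = a_n + a_{n−2} and a_{n+1} > ∑_{i=1}^{n−2} a_i. -/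
/-- auxiliary: every `{2}`-legal set contained in `[1, j+2]` has `a`-sum less
than `a (j+3) + a (j+1)`. -/
def Pp (a : ℕ → ℕ) (j : ℕ) : Prop :=
  ∀ L ⊆ Finset.Icc 1 (j+2), SlidLegal {2} L → (∑ ℓ ∈ L, a ℓ) < a (j+3) + a (j+1)

section Aux
set_option linter.unusedSectionVars false
variable {a : ℕ → ℕ} (ha : IsSlidSeq {2} a)

lemma legal_mono {S : Set ℕ} {L L' : Finset ℕ} (h : L' ⊆ L) (hleg : SlidLegal S L) :
    SlidLegal S L' := fun i hi j hj => hleg i (h hi) j (h hj)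

lemma legal_insert {L : Finset ℕ} {k : ℕ} (hL : L ⊆ Finset.Icc 1 k)
    (hleg : SlidLegal {2} L) {b : ℕ} (hb : k + 3 ≤ b) : SlidLegal {2} (insert b L) := by
  intro i hi j hj
  simp only [Finset.mem_insert] at hi hj
  rcases hi with rfl | hi <;> rcases hj with rfl | hj
  · simp
  · have := (Finset.mem_Icc.mp (hL hj)).2
    simp only [Set.mem_singleton_iff]
    omega
  · have := (Finset.mem_Icc.mp (hL hi)).2
    simp only [Set.mem_singleton_iff]
    omega
  · exact hleg i hi j hj

lemma legal_singleton (n : ℕ) : SlidLegal {2} ({n} : Finset ℕ) := by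
  intro i hi j hj
  simp only [Finset.mem_singleton] at hi hj
  subst hi; subst hj; simp

lemma legal_12 : SlidLegal {2} ({1, 2} : Finset ℕ) := by
  intro i hi j hj
  simp only [Finset.mem_insert, Finset.mem_singleton] at hi hj
  rcases hi with rfl | rfl <;> rcases hj with rfl | rfl <;> simp [Set.mem_singleton_iff]

include ha

lemma apos (n : ℕ) (h : 1 ≤ n) : 0 < a n := (ha n h).1.1

lemma not_decomp (n : ℕ) : ¬ SlidDecomp {2} a n (a (n+1)) := by
  have h := (ha (n+1) (by omega)).1.2
  simpa using h

lemma decomp_of_lt (n m : ℕ) (h0 : 0 < m) (h : m < a (n+1)) : SlidDecomp {2} a n m := by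
  by_contra hc
  have := (ha (n+1) (by omega)).2 (by simpa using And.intro h0 hc)
  omega

lemma decomp_mono {S : Set ℕ} {n n' m : ℕ} (h : n ≤ n') (hd : SlidDecomp S a n m) :
    SlidDecomp S a n' m := by
  obtain ⟨L, h1, h2, h3⟩ := hd
  exact ⟨L, h1.trans (Finset.Icc_subset_Icc_right h), h2, h3⟩

lemma decomp_self (n : ℕ) (h : 1 ≤ n) : SlidDecomp {2} a n (a n) :=
  ⟨{n}, by simp [Finset.singleton_subset_iff, h], legal_singleton n, by simp⟩

lemma amono (n : ℕ) (h : 1 ≤ n) : a n < a (n+1) := by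
  have h1 := decomp_self ha n h
  have h2 := not_decomp ha n
  rcases lt_trichotomy (a (n+1)) (a n) with hlt | heq | hgt
  · obtain ⟨k, rfl⟩ : ∃ k, n = k + 1 := ⟨n - 1, by omega⟩
    have hd := decomp_of_lt ha k (a (k+1+1)) (apos ha _ (by omega)) hlt
    exact absurd (decomp_mono ha (by omega) hd) h2
  · rw [heq] at h2; exact absurd h1 h2
  · exact hgt

lemma amono' {m n : ℕ} (h1 : 1 ≤ m) (h : m ≤ n) : a m ≤ a n := by
  induction n with
  | zero => omega
  | succ k ih =>
    rcases Nat.lt_or_ge m (k+1) with h' | h'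
    · exact le_trans (ih (by omega)) (le_of_lt (amono ha k (by omega)))
    · have : m = k + 1 := by omega
      subst this; rfl

lemma not_decomp_zero (m : ℕ) (hm : 0 < m) : ¬ SlidDecomp {2} a 0 m := by
  rintro ⟨L, h1, h2, h3⟩
  have hL : L = ∅ := Finset.subset_empty.mp (by simpa using h1)
  subst hL
  simp at h3
  omega

lemma a1val : a 1 = 1 := by
  have h := ha 1 le_rfl
  have h2 : a 1 ≤ 1 := h.2 ⟨one_pos, by simpa using not_decomp_zero ha 1 one_pos⟩
  have h3 := h.1.1
  omega

lemma a2val : a 2 = 2 := by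
  have h := ha 2 (by omega)
  have hnd : ¬ SlidDecomp {2} a 1 (a 2) := by simpa using h.1.2
  have h2 : a 2 ≤ 2 := by
    refine h.2 ⟨by omega, ?_⟩
    simp only [show (2:ℕ) - 1 = 1 from rfl]
    rintro ⟨L, h1, hleg, h3⟩
    rw [show Finset.Icc 1 1 = {1} by rfl] at h1
    rcases Finset.subset_singleton_iff.mp h1 with rfl | rfl
    · simp at h3
    · simp [a1val ha] at h3
  have hne1 : a 2 ≠ 1 := by
    intro he
    rw [he] at hnd
    have hd := decomp_self ha 1 le_rfl
    rw [a1val ha] at hd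
    exact hnd hd
  have h3 := h.1.1
  omega

lemma a3val : a 3 = 4 := by
  have h := ha 3 (by omega)
  have hnd : ¬ SlidDecomp {2} a 2 (a 3) := by simpa using h.1.2
  have h2 : a 3 ≤ 4 := by
    refine h.2 ⟨by omega, ?_⟩
    simp only [show (3:ℕ) - 1 = 2 from rfl]
    rintro ⟨L, h1, hleg, h3⟩
    have hle : ∑ ℓ ∈ L, a ℓ ≤ ∑ ℓ ∈ Finset.Icc 1 2, a ℓ :=
      Finset.sum_le_sum_of_subset h1
    rw [show Finset.Icc 1 2 = {1, 2} by rfl] at hle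
    rw [Finset.sum_insert (by simp), Finset.sum_singleton, a1val ha, a2val ha] at hle
    omega
  have hd1 : SlidDecomp {2} a 2 1 :=
    ⟨{1}, by simp, legal_singleton 1, by simp [a1val ha]⟩
  have hd2 : SlidDecomp {2} a 2 2 :=
    ⟨{2}, by simp, legal_singleton 2, by simp [a2val ha]⟩
  have hd3 : SlidDecomp {2} a 2 3 := by
    refine ⟨{1, 2}, by intro x hx; simp at hx; simp [Finset.mem_Icc]; omega, legal_12, ?_⟩
    rw [Finset.sum_insert (by simp), Finset.sum_singleton, a1val ha, a2val ha]
  have h4 := h.1.1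
  have e1 : a 3 ≠ 1 := by intro he; rw [he] at hnd; exact hnd hd1
  have e2 : a 3 ≠ 2 := by intro he; rw [he] at hnd; exact hnd hd2
  have e3 : a 3 ≠ 3 := by intro he; rw [he] at hnd; exact hnd hd3
  omega

lemma Rlem (k : ℕ) (hP : Pp a k) : a (k+4) = a (k+3) + a (k+1) := by
  have hub : a (k+4) ≤ a (k+3) + a (k+1) := by
    refine (ha (k+4) (by omega)).2 ⟨by have := apos ha (k+3) (by omega); omega, ?_⟩
    simp only [show k+4-1 = k+3 by omega]
    rintro ⟨L, hL, hleg, hsum⟩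
    by_cases h3 : k+3 ∈ L
    · have hk1 : k+1 ∉ L := by
        intro hk1
        have := hleg (k+3) h3 (k+1) hk1
        simp only [Set.mem_singleton_iff] at this
        omega
      have hadd := Finset.add_sum_erase L a h3
      have hsum' : ∑ ℓ ∈ L.erase (k+3), a ℓ = a (k+1) := by omega
      by_cases h2 : k+2 ∈ L
      · have h2' : k+2 ∈ L.erase (k+3) := Finset.mem_erase.mpr ⟨by omega, h2⟩
        have hle : a (k+2) ≤ ∑ ℓ ∈ L.erase (k+3), a ℓ :=
          Finset.single_le_sum (fun i _ => Nat.zero_le _) h2'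
        have hmm : a (k+1) < a (k+2) := amono ha (k+1) (by omega)
        omega
      · have hsub : L.erase (k+3) ⊆ Finset.Icc 1 k := by
          intro x hx
          have hxL := Finset.mem_of_mem_erase hx
          have hx3 := Finset.ne_of_mem_erase hx
          have hm := Finset.mem_Icc.mp (hL hxL)
          have hx2 : x ≠ k+2 := fun h => h2 (h ▸ hxL)
          have hx1 : x ≠ k+1 := fun h => hk1 (h ▸ hxL)
          rw [Finset.mem_Icc]
          omega
        exact not_decomp ha k
          ⟨L.erase (k+3), hsub, legal_mono (Finset.erase_subset _ _) hleg, hsum'.symm⟩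
    · have hsub : L ⊆ Finset.Icc 1 (k+2) := by
        intro x hx
        have hm := Finset.mem_Icc.mp (hL hx)
        have hx3 : x ≠ k+3 := fun h => h3 (h ▸ hx)
        rw [Finset.mem_Icc]
        omega
      have := hP L hsub hleg
      omega
  have hlt34 : a (k+3) < a (k+4) := amono ha (k+3) (by omega)
  have hlb : ¬ (a (k+4) < a (k+3) + a (k+1)) := by
    intro hlt
    have hnd : ¬ SlidDecomp {2} a (k+3) (a (k+4)) := not_decomp ha (k+3)
    set m' := a (k+4) - a (k+3) with hm'
    have hm'pos : 0 < m' := by omega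
    have hm'lt : m' < a (k+1) := by omega
    obtain ⟨L', hL', hleg', hsum'⟩ := decomp_of_lt ha k m' hm'pos hm'lt
    have hnot : (k+3) ∉ L' := by
      intro hx
      have := Finset.mem_Icc.mp (hL' hx)
      omega
    refine hnd ⟨insert (k+3) L', ?_, legal_insert hL' hleg' le_rfl, ?_⟩
    · refine Finset.insert_subset (by rw [Finset.mem_Icc]; omega) ?_
      exact hL'.trans (Finset.Icc_subset_Icc_right (by omega))
    · rw [Finset.sum_insert hnot]
      omega
  omega

lemma Pbase (m B : ℕ) (f : ℕ → ℕ)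
    (hf : ∀ i ∈ Finset.Icc 1 m, a i = f i)
    (hd : ∀ L ∈ (Finset.Icc 1 m).powerset,
        (∀ i ∈ L, ∀ j ∈ L, ((i:ℤ)-(j:ℤ)).natAbs ≠ 2) → (∑ ℓ ∈ L, f ℓ) < B) :
    ∀ L ⊆ Finset.Icc 1 m, SlidLegal {2} L → (∑ ℓ ∈ L, a ℓ) < B := by
  intro L hL hleg
  rw [Finset.sum_congr rfl (fun x hx => hf x (hL hx))]
  refine hd L (Finset.mem_powerset.mpr hL) (fun i hi j hj => ?_)
  have := hleg i hi j hj
  simpa [Set.mem_singleton_iff] using this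

lemma Plem : ∀ j, Pp a j := by
  intro j
  induction j using Nat.strong_induction_on with
  | _ j IH =>
  set f : ℕ → ℕ := fun i => [0,1,2,4,5,7].getD i 0 with hfdef
  rcases Nat.lt_or_ge j 4 with hj | hj
  · -- base cases
    have v4 : j ≥ 1 → a 4 = 5 := fun h => by
      have := Rlem ha 0 (IH 0 (by omega))
      rw [a3val ha, a1val ha] at this
      simpa using this
    have v5 : j ≥ 2 → a 5 = 7 := fun h => by
      have := Rlem ha 1 (IH 1 (by omega))
      rw [v4 (by omega), a2val ha] at this
      simpa using this
    have v6 : j ≥ 3 → a 6 = 11 := fun h => by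
      have := Rlem ha 2 (IH 2 (by omega))
      rw [v5 (by omega), a3val ha] at this
      simpa using this
    interval_cases j
    · intro L hL hleg
      have hb := Pbase ha 2 5 f (by
        intro i hi
        rw [Finset.mem_Icc] at hi
        obtain ⟨hi1, hi2⟩ := hi
        interval_cases i
        · exact a1val ha
        · exact a2val ha) (by decide) L hL hleg
      rw [a3val ha, a1val ha]
      omega
    · intro L hL hleg
      have hb := Pbase ha 3 7 f (by
        intro i hi
        rw [Finset.mem_Icc] at hi
        obtain ⟨hi1, hi2⟩ := hi
        interval_cases i
        · exact a1val ha
        · exact a2val ha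
        · exact a3val ha) (by decide) L hL hleg
      rw [v4 (by omega), a2val ha]
      omega
    · intro L hL hleg
      have hb := Pbase ha 4 11 f (by
        intro i hi
        rw [Finset.mem_Icc] at hi
        obtain ⟨hi1, hi2⟩ := hi
        interval_cases i
        · exact a1val ha
        · exact a2val ha
        · exact a3val ha
        · exact v4 (by omega)) (by decide) L hL hleg
      rw [v5 (by omega), a3val ha]
      omega
    · intro L hL hleg
      have hb := Pbase ha 5 16 f (by
        intro i hi
        rw [Finset.mem_Icc] at hi
        obtain ⟨hi1, hi2⟩ := hi
        interval_cases i
        · exact a1val ha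
        · exact a2val ha
        · exact a3val ha
        · exact v4 (by omega)
        · exact v5 (by omega)) (by decide) L hL hleg
      rw [v6 (by omega), v4 (by omega)]
      omega
  · -- inductive step
    obtain ⟨i, rfl⟩ : ∃ i, j = i + 4 := ⟨j - 4, by omega⟩
    intro L hL hleg
    have R1 : a (i+7) = a (i+6) + a (i+4) := Rlem ha (i+3) (IH (i+3) (by omega))
    have R2 : a (i+4) = a (i+3) + a (i+1) := Rlem ha i (IH i (by omega))
    show (∑ ℓ ∈ L, a ℓ) < a (i+7) + a (i+5)
    by_cases h6 : i+6 ∈ L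
    · have h4 : i+4 ∉ L := by
        intro h4
        have := hleg (i+6) h6 (i+4) h4
        simp only [Set.mem_singleton_iff] at this
        omega
      have e1 := Finset.add_sum_erase L a h6
      by_cases h5 : i+5 ∈ L
      · have h3 : i+3 ∉ L := by
          intro h3
          have := hleg (i+5) h5 (i+3) h3
          simp only [Set.mem_singleton_iff] at this
          omega
        have h5' : i+5 ∈ L.erase (i+6) := Finset.mem_erase.mpr ⟨by omega, h5⟩
        have e2 := Finset.add_sum_erase (L.erase (i+6)) a h5'
        have hsub : (L.erase (i+6)).erase (i+5) ⊆ Finset.Icc 1 (i+2) := by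
          intro x hx
          have hx5 := Finset.ne_of_mem_erase hx
          have hx' := Finset.mem_of_mem_erase hx
          have hx6 := Finset.ne_of_mem_erase hx'
          have hxL := Finset.mem_of_mem_erase hx'
          have hm := Finset.mem_Icc.mp (hL hxL)
          have hx4 : x ≠ i+4 := fun h => h4 (h ▸ hxL)
          have hx3 : x ≠ i+3 := fun h => h3 (h ▸ hxL)
          rw [Finset.mem_Icc]
          omega
        have hIH := IH i (by omega) _ hsub
          (legal_mono (Finset.erase_subset _ _) (legal_mono (Finset.erase_subset _ _) hleg))
        omega
      · have hsub : L.erase (i+6) ⊆ Finset.Icc 1 (i+3) := by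
          intro x hx
          have hx6 := Finset.ne_of_mem_erase hx
          have hxL := Finset.mem_of_mem_erase hx
          have hm := Finset.mem_Icc.mp (hL hxL)
          have hx5 : x ≠ i+5 := fun h => h5 (h ▸ hxL)
          have hx4 : x ≠ i+4 := fun h => h4 (h ▸ hxL)
          rw [Finset.mem_Icc]
          omega
        have hIH : (∑ ℓ ∈ L.erase (i+6), a ℓ) < a (i+4) + a (i+2) := IH (i+1) (by omega) _ hsub
          (legal_mono (Finset.erase_subset _ _) hleg)
        have hm1 : a (i+2) ≤ a (i+5) := amono' ha (by omega) (by omega)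
        omega
    · have hsub : L ⊆ Finset.Icc 1 (i+5) := by
        intro x hx
        have hm := Finset.mem_Icc.mp (hL hx)
        have hx6 : x ≠ i+6 := fun h => h6 (h ▸ hx)
        rw [Finset.mem_Icc]
        omega
      have hIH : (∑ ℓ ∈ L, a ℓ) < a (i+6) + a (i+4) := IH (i+3) (by omega) _ hsub hleg
      have hm1 : a (i+6) ≤ a (i+7) := amono' ha (by omega) (by omega)
      have hm2 : a (i+4) ≤ a (i+5) := amono' ha (by omega) (by omega)
      omega

lemma recur (k : ℕ) : a (k+4) = a (k+3) + a (k+1) := Rlem ha k (Plem ha k)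

lemma sumbd : ∀ k, (∑ i ∈ Finset.Icc 1 (k+1), a i) < a (k+4) := by
  intro k
  induction k with
  | zero =>
    have h4 : a 4 = 5 := by
      have := recur ha 0
      rw [a3val ha, a1val ha] at this
      simpa using this
    rw [show Finset.Icc 1 1 = {1} by rfl, Finset.sum_singleton, a1val ha, h4]
    omega
  | succ k ih =>
    have hr : a (k+5) = a (k+4) + a (k+2) := recur ha (k+1)
    show (∑ i ∈ Finset.Icc 1 (k+2), a i) < a (k+5)
    rw [ Finset.sum_Icc_succ_top (by omega : 1 ≤ k+2)]
    have he : a (k+1+1) = a (k+2) := rfl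
    have hm : a (k+2) < a (k+4) := by
      have h1 : a (k+2) < a (k+3) := amono ha (k+2) (by omega)
      have h2 : a (k+3) < a (k+4) := amono ha (k+3) (by omega)
      omega
    omega

end Aux

theorem two_slid_recurrence
    (a : ℕ → ℕ) (ha : IsSlidSeq {2} a) :
    a 1 = 1 ∧ a 2 = 2 ∧ a 3 = 4 ∧
    ∀ n, 3 ≤ n →
      a (n + 1) = a n + a (n - 2) ∧
      (∑ i ∈ Finset.Icc 1 (n - 2), a i) < a (n + 1) := by
  refine ⟨a1val ha, a2val ha, a3val ha, ?_⟩
  intro n hn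
  obtain ⟨k, rfl⟩ : ∃ k, n = k + 3 := ⟨n - 3, by omega⟩
  rw [show k + 3 - 2 = k + 1 from rfl, show k + 3 + 1 = k + 4 from rfl]
  exact ⟨recur ha k, sumbd ha k⟩
end

section
/- Let k and n be positive integers and let (a_n)_{n≥1} be the {1,...,k}-LID sequence. Then the largest integer admitting a {1,...,k}-LID decomposition using {a_1, ..., a_n} is ∑ a_{n−i(k+1)}, where the sum ranges over all nonnegative integers i with n − i(k+1) ≥ 1. Consequently, a_{n+1} ≤ 1 + ∑ a_{n−i(k+1)} over the same range of i. -/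
/-- The candidate greatest decomposable value. -/
def auxG (k : ℕ) (a : ℕ → ℕ) (n : ℕ) : ℕ :=
  ∑ i ∈ (Finset.range (n + 1)).filter (fun i => 1 ≤ n - i * (k + 1)),
    a (n - i * (k + 1))

lemma auxG_zero (k : ℕ) (a : ℕ → ℕ) : auxG k a 0 = 0 := by
  simp [auxG]

lemma auxFilter (k n : ℕ) (hn : 1 ≤ n) :
    (Finset.range (n + 1)).filter (fun i => 1 ≤ n - i * (k + 1)) =
      Finset.range ((n - 1) / (k + 1) + 1) := by
  ext i
  simp only [Finset.mem_filter, Finset.mem_range]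
  constructor
  · rintro ⟨-, h2⟩
    have h3 : i * (k + 1) ≤ n - 1 := by omega
    have := (Nat.le_div_iff_mul_le (by omega : 0 < k + 1)).2 h3
    omega
  · intro h
    have h' : i ≤ (n - 1) / (k + 1) := by omega
    have h1 := (Nat.le_div_iff_mul_le (by omega : 0 < k + 1)).1 h'
    have hi : i ≤ i * (k + 1) := Nat.le_mul_of_pos_right _ (by omega : 0 < k + 1)
    omega

lemma auxGrec (k : ℕ) (a : ℕ → ℕ) (n : ℕ) (hn : 1 ≤ n) :
    auxG k a n = a n + auxG k a (n - (k + 1)) := by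
  rw [auxG, auxFilter k n hn, Finset.sum_range_succ']
  simp only [Nat.zero_mul, Nat.sub_zero]
  by_cases h : n ≤ k + 1
  · have hm : n - (k + 1) = 0 := by omega
    have hq : (n - 1) / (k + 1) = 0 := Nat.div_eq_of_lt (by omega)
    rw [hq, hm, auxG_zero]
    simp
  · have hm1 : 1 ≤ n - (k + 1) := by omega
    rw [auxG, auxFilter k (n - (k + 1)) hm1]
    have hq : (n - 1) / (k + 1) = (n - (k + 1) - 1) / (k + 1) + 1 := by
      have : n - 1 = (n - (k + 1) - 1) + (k + 1) := by omega
      rw [this, Nat.add_div_right _ (Nat.succ_pos k)]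
    rw [hq]
    have hterm : ∀ i, a (n - (i + 1) * (k + 1)) = a (n - (k + 1) - i * (k + 1)) := by
      intro i
      congr 1
      have : (i + 1) * (k + 1) = i * (k + 1) + (k + 1) := by ring
      omega
    rw [Finset.sum_congr rfl (fun i _ => hterm i)]
    omega

lemma decompMono (S : Set ℕ) (a : ℕ → ℕ) {m n x : ℕ} (h : m ≤ n)
    (hd : SlidDecomp S a m x) : SlidDecomp S a n x := by
  obtain ⟨L, hL, hleg, hx⟩ := hd
  exact ⟨L, hL.trans (Finset.Icc_subset_Icc_right h), hleg, hx⟩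

lemma aPos {k : ℕ} {a : ℕ → ℕ} (ha : IsSlidSeq (Set.Icc 1 k) a) {n : ℕ} (hn : 1 ≤ n) :
    1 ≤ a n := (ha n hn).1.1

lemma aMono {k : ℕ} {a : ℕ → ℕ} (ha : IsSlidSeq (Set.Icc 1 k) a) {m n : ℕ}
    (hm : 1 ≤ m) (hmn : m ≤ n) : a m ≤ a n := by
  have hn : 1 ≤ n := hm.trans hmn
  refine (ha m hm).2 ⟨(ha n hn).1.1, fun d => (ha n hn).1.2 ?_⟩
  exact decompMono _ _ (by omega) d

lemma notInIcc {k d : ℕ} (hd : d = 0 ∨ k + 1 ≤ d) : d ∉ Set.Icc 1 k := by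
  simp only [Set.mem_Icc, not_and, not_le]
  omega

/-- Membership: `auxG k a n` is decomposable. -/
lemma auxG_mem (k : ℕ) (a : ℕ → ℕ) (n : ℕ) :
    SlidDecomp (Set.Icc 1 k) a n (auxG k a n) := by
  classical
  set F := (Finset.range (n + 1)).filter (fun i => 1 ≤ n - i * (k + 1)) with hF
  have hFc : ∀ i ∈ F, 1 ≤ n - i * (k + 1) := by
    intro i hi; exact (Finset.mem_filter.1 hi).2
  refine ⟨F.image (fun i => n - i * (k + 1)), ?_, ?_, ?_⟩
  · intro x hx
    obtain ⟨i, hi, rfl⟩ := Finset.mem_image.1 hx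
    have := hFc i hi
    exact Finset.mem_Icc.2 ⟨this, by omega⟩
  · intro x hx y hy
    obtain ⟨i, hi, rfl⟩ := Finset.mem_image.1 hx
    obtain ⟨j, hj, rfl⟩ := Finset.mem_image.1 hy
    have hci := hFc i hi
    have hcj := hFc j hj
    apply notInIcc
    rcases Nat.lt_trichotomy i j with h | h | h
    · have : (i + 1) * (k + 1) ≤ j * (k + 1) := Nat.mul_le_mul_right _ h
      have h2 : i * (k + 1) + (k + 1) ≤ j * (k + 1) := by
        have : (i + 1) * (k + 1) = i * (k + 1) + (k + 1) := by ring
        omega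
      omega
    · subst h; omega
    · have : (j + 1) * (k + 1) ≤ i * (k + 1) := Nat.mul_le_mul_right _ h
      have h2 : j * (k + 1) + (k + 1) ≤ i * (k + 1) := by
        have : (j + 1) * (k + 1) = j * (k + 1) + (k + 1) := by ring
        omega
      omega
  · rw [auxG, Finset.sum_image]
    intro i hi j hj hij
    have hci := hFc i hi
    have hcj := hFc j hj
    have : i * (k + 1) = j * (k + 1) := by simp only at hij; omega
    exact Nat.eq_of_mul_eq_mul_right (Nat.succ_pos k) this

/-- Upper bound: every decomposable value is at most `auxG k a n`. -/
lemma auxG_ub {k : ℕ} {a : ℕ → ℕ} (ha : IsSlidSeq (Set.Icc 1 k) a) :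
    ∀ n, ∀ L ⊆ Finset.Icc 1 n, SlidLegal (Set.Icc 1 k) L →
      ∑ ℓ ∈ L, a ℓ ≤ auxG k a n := by
  intro n
  induction n using Nat.strong_induction_on with
  | _ n IH =>
    intro L hL hleg
    rcases L.eq_empty_or_nonempty with rfl | hne
    · simp
    · have hM := L.max'_mem hne
      set M := L.max' hne with hMdef
      have hMIcc := Finset.mem_Icc.1 (hL hM)
      have hn1 : 1 ≤ n := le_trans hMIcc.1 hMIcc.2
      have herase : L.erase M ⊆ Finset.Icc 1 (M - (k + 1)) := by
        intro j hj
        have hjL := Finset.mem_of_mem_erase hj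
        have hjM : j ≠ M := Finset.ne_of_mem_erase hj
        have hjle : j ≤ M := Finset.le_max' L j hjL
        have hj1 : 1 ≤ j := (Finset.mem_Icc.1 (hL hjL)).1
        have hlg := hleg M hM j hjL
        simp only [Set.mem_Icc, not_and, not_le] at hlg
        rw [Finset.mem_Icc]
        omega
      have hkey : ∑ ℓ ∈ L.erase M, a ℓ ≤ auxG k a (n - (k + 1)) := by
        refine IH (n - (k + 1)) (by omega) _
          (herase.trans (Finset.Icc_subset_Icc_right (by omega))) ?_
        intro i hi j hj
        exact hleg i (Finset.mem_of_mem_erase hi) j (Finset.mem_of_mem_erase hj)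
      have hsum : ∑ ℓ ∈ L, a ℓ = a M + ∑ ℓ ∈ L.erase M, a ℓ :=
        (Finset.add_sum_erase _ _ hM).symm
      rw [hsum, auxGrec k a n hn1]
      exact Nat.add_le_add (aMono ha hMIcc.1 hMIcc.2) hkey

theorem interval_slid_greatest_decomposable
    (k n : ℕ) (hk : 1 ≤ k) (hn : 1 ≤ n)
    (a : ℕ → ℕ) (ha : IsSlidSeq (Set.Icc 1 k) a) :
    IsGreatest {m | SlidDecomp (Set.Icc 1 k) a n m}
      (∑ i ∈ (Finset.range (n + 1)).filter (fun i => 1 ≤ n - i * (k + 1)),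
        a (n - i * (k + 1))) ∧
    a (n + 1) ≤ 1 + ∑ i ∈ (Finset.range (n + 1)).filter
        (fun i => 1 ≤ n - i * (k + 1)), a (n - i * (k + 1)) := by
  have hG : (∑ i ∈ (Finset.range (n + 1)).filter (fun i => 1 ≤ n - i * (k + 1)),
      a (n - i * (k + 1))) = auxG k a n := rfl
  rw [hG]
  have hub : ∀ m ∈ {m | SlidDecomp (Set.Icc 1 k) a n m}, m ≤ auxG k a n := by
    rintro m ⟨L, hL, hleg, rfl⟩
    exact auxG_ub ha n L hL hleg
  refine ⟨⟨auxG_mem k a n, hub⟩, ?_⟩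
  refine (ha (n + 1) (by omega)).2 ⟨by omega, ?_⟩
  intro hd
  have : n + 1 - 1 = n := by omega
  rw [this] at hd
  have := hub _ hd
  omega
end

section
/- Let c' be an integer with c' ≥ c > 0 and k ≥ 2(c' + 1). Then for all n ≥ 1, a_{n+(k−c')} > ∑ a_{n−i(k−c)}, where the sum ranges over all nonnegative integers i with n − i(k−c) ≥ 1. -/
private lemma slid_decomp_mono {S : Set ℕ} {a : ℕ → ℕ} {x y m : ℕ} (h : x ≤ y)
    (hd : SlidDecomp S a x m) : SlidDecomp S a y m := by
  obtain ⟨L, hsub, hleg, hsum⟩ := hd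
  exact ⟨L, hsub.trans (Finset.Icc_subset_Icc_right h), hleg, hsum⟩

private lemma slid_pos {S : Set ℕ} {a : ℕ → ℕ} (ha : IsSlidSeq S a) {n : ℕ} (hn : 1 ≤ n) :
    0 < a n := (ha n hn).1.1

private lemma slid_mono {S : Set ℕ} {a : ℕ → ℕ} (ha : IsSlidSeq S a) {x y : ℕ}
    (hx : 1 ≤ x) (hxy : x ≤ y) : a x ≤ a y := by
  have h1 := ha x hx
  have h2 := ha y (hx.trans hxy)
  exact h1.2 ⟨h2.1.1, fun hD => h2.1.2 (slid_decomp_mono (by omega) hD)⟩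

private lemma slid_single {S : Set ℕ} {a : ℕ → ℕ} (h0 : (0 : ℕ) ∉ S) {x : ℕ} (hx : 1 ≤ x) :
    SlidDecomp S a x (a x) := by
  refine ⟨{x}, ?_, ?_, ?_⟩
  · simp [Finset.singleton_subset_iff, Finset.mem_Icc, hx]
  · intro i hi j hj
    simp only [Finset.mem_singleton] at hi hj
    subst hi; subst hj
    simpa using h0
  · simp

private lemma slid_strict {S : Set ℕ} {a : ℕ → ℕ} (ha : IsSlidSeq S a) (h0 : (0 : ℕ) ∉ S)
    {x : ℕ} (hx : 1 ≤ x) : a x < a (x + 1) := by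
  have hle := slid_mono ha hx (Nat.le_succ x)
  rcases lt_or_eq_of_le hle with h | h
  · exact h
  · exfalso
    have hnd := (ha (x + 1) (by omega)).1.2
    have : SlidDecomp S a (x + 1 - 1) (a (x + 1)) := by
      have := slid_single (a := a) h0 hx
      rw [h] at this
      simpa using this
    exact hnd this

private lemma slid_strict_mono {S : Set ℕ} {a : ℕ → ℕ} (ha : IsSlidSeq S a) (h0 : (0 : ℕ) ∉ S)
    {x y : ℕ} (hx : 1 ≤ x) (hxy : x < y) : a x < a y :=
  lt_of_lt_of_le (slid_strict ha h0 hx) (slid_mono ha (by omega) hxy)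

private lemma slid_rep {S : Set ℕ} {a : ℕ → ℕ} (ha : IsSlidSeq S a) {y m : ℕ}
    (hy : 1 ≤ y) (hm : 0 < m) (hlt : m < a y) : SlidDecomp S a (y - 1) m := by
  by_contra hD
  exact absurd ((ha y hy).2 ⟨hm, hD⟩) (by omega)

/-- Superadditivity across gaps larger than `k = max S`. -/
private lemma slid_superadd {S : Set ℕ} {a : ℕ → ℕ} (ha : IsSlidSeq S a)
    (h0 : (0 : ℕ) ∉ S) {k : ℕ} (hSk : ∀ s ∈ S, s ≤ k) {x : ℕ} (hx : k + 1 ≤ x) :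
    a x + a (x - k) ≤ a (x + 1) := by
  have hx1 : 1 ≤ x := by omega
  have hxk : 1 ≤ x - k := by omega
  by_contra hcon
  push_neg at hcon
  have hlt : a x < a (x + 1) := slid_strict ha h0 hx1
  have hr1 : 0 < a (x + 1) - a x := by omega
  have hr2 : a (x + 1) - a x < a (x - k) := by omega
  obtain ⟨L, hsub, hleg, hsum⟩ := slid_rep ha hxk hr1 hr2
  have hxL : x ∉ L := by
    intro h
    have := hsub h
    simp only [Finset.mem_Icc] at this
    omega
  have key : ∀ z ∈ L, ((x : ℤ) - (z : ℤ)).natAbs ∉ S := by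
    intro z hz hmem
    have hzm := hsub hz
    simp only [Finset.mem_Icc] at hzm
    have hcast : ((x : ℤ) - (z : ℤ)).natAbs = x - z := by omega
    have := hSk _ hmem
    omega
  have hD : SlidDecomp S a x (a (x + 1)) := by
    refine ⟨insert x L, ?_, ?_, ?_⟩
    · intro i hi
      rcases Finset.mem_insert.1 hi with rfl | hiL
      · simp only [Finset.mem_Icc]; omega
      · have := hsub hiL
        simp only [Finset.mem_Icc] at this ⊢
        omega
    · intro i hi j hj
      rcases Finset.mem_insert.1 hi with rfl | hiL <;>
        rcases Finset.mem_insert.1 hj with rfl | hjL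
      · simpa using h0
      · exact key _ hjL
      · rw [← Int.natAbs_neg, neg_sub]
        exact key _ hiL
      · exact hleg _ hiL _ hjL
    · rw [Finset.sum_insert hxL, ← hsum]
      omega
  have hnd := (ha (x + 1) (by omega)).1.2
  rw [show x + 1 - 1 = x from by omega] at hnd
  exact hnd hD

private lemma msum_filter_eq (d n : ℕ) (hd : 0 < d) (hn : 1 ≤ n) :
    (Finset.range n).filter (fun i => 1 ≤ n - i * d) = Finset.range ((n - 1) / d + 1) := by
  ext i
  simp only [Finset.mem_filter, Finset.mem_range, Nat.lt_succ_iff, Nat.le_div_iff_mul_le hd]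
  constructor
  · rintro ⟨h1, h2⟩; omega
  · intro h
    have hi : i ≤ i * d := Nat.le_mul_of_pos_right _ hd
    omega

private lemma msum_base (a : ℕ → ℕ) (d n : ℕ) (hd : 0 < d) (h1 : 1 ≤ n) (h2 : n ≤ d) :
    (∑ i ∈ (Finset.range n).filter (fun i => 1 ≤ n - i * d), a (n - i * d)) = a n := by
  rw [msum_filter_eq d n hd h1]
  have : (n - 1) / d = 0 := Nat.div_eq_of_lt (by omega)
  rw [this]
  simp

private lemma msum_step (a : ℕ → ℕ) (d n : ℕ) (hd : 0 < d) (h : d < n) :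
    (∑ i ∈ (Finset.range n).filter (fun i => 1 ≤ n - i * d), a (n - i * d))
      = a n + (∑ i ∈ (Finset.range (n - d)).filter (fun i => 1 ≤ n - d - i * d),
          a (n - d - i * d)) := by
  rw [msum_filter_eq d n hd (by omega), msum_filter_eq d (n - d) hd (by omega)]
  have h1 : (n - 1) / d = (n - d - 1) / d + 1 := by
    have e : n - 1 = (n - d - 1) + d := by omega
    rw [e, Nat.add_div_right _ hd]
  rw [h1, Finset.sum_range_succ']
  have h2 : ∀ i : ℕ, n - (i + 1) * d = n - d - i * d := by
    intro i
    have : (i + 1) * d = i * d + d := by ring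
    omega
  simp only [h2, Nat.zero_mul, Nat.sub_zero]
  omega

theorem gap_sum_bound
    (S : Finset ℕ) (hne : S.Nonempty) (hpos : ∀ s ∈ S, 0 < s)
    (k : ℕ) (hk : k = S.max' hne)
    (c : ℕ) (hc : 0 < c)
    (hleast : IsLeast {m | 0 < m ∧ m ∉ (S : Set ℕ)} (k - c))
    (a : ℕ → ℕ) (ha : IsSlidSeq ↑S a)
    (c' : ℕ) (hcc : c ≤ c') (hk2 : 2 * (c' + 1) ≤ k) :
    ∀ n, 1 ≤ n →
      (∑ i ∈ (Finset.range n).filter (fun i => 1 ≤ n - i * (k - c)),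
        a (n - i * (k - c))) < a (n + (k - c')) := by
  have h0 : (0 : ℕ) ∉ (S : Set ℕ) := by
    intro h
    exact absurd (hpos 0 (by exact_mod_cast h)) (lt_irrefl 0)
  have hSk : ∀ s ∈ (S : Set ℕ), s ≤ k := by
    intro s hs
    rw [hk]
    exact S.le_max' s (by exact_mod_cast hs)
  have hck : c + 2 ≤ k - c := by omega
  have hck' : c' + 2 ≤ k - c' := by omega
  have hdd' : k - c' ≤ k - c := by omega
  have hd : 0 < k - c := by omega
  intro n
  induction n using Nat.strong_induction_on with
  | _ n IH =>
    intro hn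
    rcases le_or_gt n (k - c) with h1 | h1
    · -- base case: only one term in the sum
      rw [msum_base a (k - c) n hd hn h1]
      exact slid_strict_mono ha h0 hn (by omega)
    · rcases le_or_gt n (2 * (k - c)) with h2 | h2
      · -- two terms in the sum
        rw [msum_step a (k - c) n hd h1,
            msum_base a (k - c) (n - (k - c)) hd (by omega) (by omega)]
        -- a n + a (n - (k-c)) < a (n + (k - c'))
        have hB := slid_superadd ha h0 hSk (x := n + (k - c') - 1) (by omega)
        rw [show n + (k - c') - 1 + 1 = n + (k - c') from by omega] at hB
        have hm1 : a n < a (n + (k - c') - 1) := slid_strict_mono ha h0 hn (by omega)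
        have hm2 : a (n - (k - c)) ≤ a (n + (k - c') - 1 - k) :=
          slid_mono ha (by omega) (by omega)
        omega
      · -- at least three terms: use IH at n - 2(k-c)
        rw [msum_step a (k - c) n hd h1,
            msum_step a (k - c) (n - (k - c)) hd (by omega)]
        have hIH := IH (n - (k - c) - (k - c)) (by omega) (by omega)
        have hB1 := slid_superadd ha h0 hSk (x := n + (k - c') - 1) (by omega)
        rw [show n + (k - c') - 1 + 1 = n + (k - c') from by omega] at hB1
        have hB2 := slid_superadd ha h0 hSk (x := n + (k - c') - 2) (by omega)
        rw [show n + (k - c') - 2 + 1 = n + (k - c') - 1 from by omega] at hB2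
        have hm1 : a n ≤ a (n + (k - c') - 2) := slid_mono ha hn (by omega)
        have hm2 : a (n - (k - c)) ≤ a (n + (k - c') - 1 - k) :=
          slid_mono ha (by omega) (by omega)
        have hm3 : a (n - (k - c) - (k - c) + (k - c')) ≤ a (n + (k - c') - 2 - k) :=
          slid_mono ha (by omega) (by omega)
        omega
end

section
/- Let d be a positive integer and n an integer. If C_d(n), C_d(n−k), A(n+1), A(n), A(n+c), and A(n−d) all hold, then C_d(n+1) holds; that is, a_{n+2} + a_{n+1} > a_{n+c+1} + a_{n−d+1}. -/
theorem C_induction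
    (S : Finset ℕ) (hne : S.Nonempty) (hpos : ∀ s ∈ S, 0 < s)
    (k : ℕ) (hk : k = S.max' hne)
    (c : ℕ) (hc : 0 < c)
    (hleast : IsLeast {m | 0 < m ∧ m ∉ (S : Set ℕ)} (k - c))
    (a : ℕ → ℕ) (ha : IsSlidSeq ↑S a)
    (d : ℕ) (hd : 0 < d) (n : ℕ)
    (hCn : a (n + c) + a (n - d) < a (n + 1) + a n)
    (hCnk : a (n - k + c) + a (n - k - d) < a (n - k + 1) + a (n - k))
    (hA1 : a (n + 2) = a (n + 1) + a (n + 1 - k))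
    (hA0 : a (n + 1) = a n + a (n - k))
    (hAc : a (n + c + 1) = a (n + c) + a (n + c - k))
    (hAd : a (n - d + 1) = a (n - d) + a (n - d - k)) :
    a (n + c + 1) + a (n - d + 1) < a (n + 2) + a (n + 1) := by
  rcases le_or_gt k n with h | h
  · have e1 : n + c - k = n - k + c := by omega
    have e2 : n + 1 - k = n - k + 1 := by omega
    have e3 : n - d - k = n - k - d := by omega
    rw [e1] at hAc
    rw [e2] at hA1
    rw [e3] at hAd
    omega
  · exfalso
    have hnk : n - k = 0 := by omega
    rw [hnk] at hCnk
    simp only [Nat.zero_add, Nat.zero_sub] at hCnk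
    -- hCnk : a c + a 0 < a 1 + a 0, so a c < a 1
    have hac1 : a c < a 1 := by omega
    have h1 := ha 1 le_rfl
    have hcpos : 0 < a c := (ha c hc).1.1
    have hle : a 1 ≤ a c := by
      apply h1.2
      refine ⟨hcpos, ?_⟩
      rintro ⟨L, hL, _, hm⟩
      have hLe : L = ∅ := by
        apply Finset.subset_empty.mp
        simpa using hL
      rw [hLe] at hm
      simp at hm
      omega
    omega
end

section
/- Let T be a finite non-empty set of positive integers with c = max T. For each integer k > c, let (a^{(k)}_n)_{n≥1} denote the S_k-LID sequence for S_k = {1,...,k} \ {k − t : t ∈ T}. Then: (1) for every k > c, a^{(k)}_n = n for all 1 ≤ n ≤ k − c + 1; and (2) for every integer i, there exists an integer f (independent of k) such that a^{(k)}_{k+i} = k + f for all integers k ≥ i + 2c − 1 with k > c and k + i ≥ 1. -/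
lemma sdiff_Icc_nonempty (F : Finset ℤ) (lo : ℤ) :
    ((Finset.Icc lo (lo + F.card)) \ F).Nonempty := by
  rw [← Finset.card_pos]
  have h1 : (Finset.Icc lo (lo + F.card)).card = F.card + 1 := by
    rw [Int.card_Icc]; omega
  have h2 := Finset.card_le_card_sdiff_add_card (s := Finset.Icc lo (lo + F.card)) (t := F)
  omega

/-- The least element `≥ lo` not belonging to `F`. -/
noncomputable def leastNotMem (F : Finset ℤ) (lo : ℤ) : ℤ :=
  ((Finset.Icc lo (lo + F.card)) \ F).min' (sdiff_Icc_nonempty F lo)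

lemma leastNotMem_not_mem (F : Finset ℤ) (lo : ℤ) : leastNotMem F lo ∉ F :=
  (Finset.mem_sdiff.mp (Finset.min'_mem _ (sdiff_Icc_nonempty F lo))).2

lemma leastNotMem_le {F : Finset ℤ} {lo : ℤ} : lo ≤ leastNotMem F lo :=
  (Finset.mem_Icc.mp (Finset.mem_sdiff.mp (Finset.min'_mem _ (sdiff_Icc_nonempty F lo))).1).1

lemma mem_of_lt_leastNotMem {F : Finset ℤ} {lo z : ℤ} (h1 : lo ≤ z)
    (h2 : z < leastNotMem F lo) : z ∈ F := by
  by_contra hz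
  unfold leastNotMem at h2
  have hub : ((Finset.Icc lo (lo + F.card)) \ F).min' (sdiff_Icc_nonempty F lo) ≤ lo + F.card :=
    (Finset.mem_Icc.mp (Finset.mem_sdiff.mp (Finset.min'_mem _ (sdiff_Icc_nonempty F lo))).1).2
  have : z ∈ (Finset.Icc lo (lo + F.card)) \ F := by
    rw [Finset.mem_sdiff, Finset.mem_Icc]
    exact ⟨⟨h1, by omega⟩, hz⟩
  have := Finset.min'_le _ _ this
  omega

/-- The finite set of "fringe offsets" forced to be decomposable at stage `m`,
given the fringe values `g p` for `p < m`. -/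
noncomputable def fringeSet (T : Finset ℕ) (c : ℕ) (g : ℕ → ℤ) (m : ℕ) : Finset ℤ :=
  insert (2 - (c : ℤ)) <|
    (Finset.range m).biUnion fun p =>
      insert (g p) <|
        ((T.filter fun t : ℕ => 1 ≤ 2 - (c : ℤ) + (p : ℤ) + (t : ℤ)).image
            fun t : ℕ => 2 - (c : ℤ) + (p : ℤ) + (t : ℤ) + g p)
        ∪ ((Finset.Icc (1 : ℤ) (2 - (c : ℤ) + p - 1)).image fun x => g p + x)

lemma fringeSet_congr (T : Finset ℕ) (c : ℕ) (g g' : ℕ → ℤ) (m : ℕ)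
    (h : ∀ p < m, g p = g' p) : fringeSet T c g m = fringeSet T c g' m := by
  unfold fringeSet
  congr 1
  apply Finset.biUnion_congr rfl
  intro p hp
  rw [Finset.mem_range] at hp
  rw [h p hp]

/-- The fringe offset function: `fringe T c m` is `f_{2-c+m}`. -/
noncomputable def fringe (T : Finset ℕ) (c : ℕ) : ℕ → ℤ := fun m =>
  leastNotMem (fringeSet T c (fun p => if h : p < m then fringe T c p else 0) m)
    (2 - (c : ℤ))
termination_by m => m

lemma fringe_eq (T : Finset ℕ) (c : ℕ) (m : ℕ) :
    fringe T c m = leastNotMem (fringeSet T c (fringe T c) m) (2 - (c : ℤ)) := by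
  rw [fringe]
  congr 1
  apply fringeSet_congr
  intro p hp
  simp [hp]

lemma fringe_lb (T : Finset ℕ) (c : ℕ) (m : ℕ) : 2 - (c : ℤ) ≤ fringe T c m := by
  rw [fringe_eq]; exact leastNotMem_le

lemma fringe_not_mem (T : Finset ℕ) (c : ℕ) (m : ℕ) :
    fringe T c m ∉ fringeSet T c (fringe T c) m := by
  rw [fringe_eq]; exact leastNotMem_not_mem _ _

lemma mem_of_lt_fringe (T : Finset ℕ) (c : ℕ) (m : ℕ) {z : ℤ} (h1 : 2 - (c : ℤ) ≤ z)
    (h2 : z < fringe T c m) : z ∈ fringeSet T c (fringe T c) m := by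
  rw [fringe_eq] at h2; exact mem_of_lt_leastNotMem h1 h2

lemma mem_fringeSet_iff (T : Finset ℕ) (c : ℕ) (g : ℕ → ℤ) (m : ℕ) (z : ℤ) :
    z ∈ fringeSet T c g m ↔
      z = 2 - (c : ℤ) ∨ ∃ p < m, z = g p ∨
        (∃ t ∈ T, 1 ≤ 2 - (c : ℤ) + p + t ∧ z = 2 - (c : ℤ) + p + t + g p) ∨
        (∃ x : ℤ, 1 ≤ x ∧ x ≤ 2 - (c : ℤ) + p - 1 ∧ z = g p + x) := by
  simp only [fringeSet, Finset.mem_insert, Finset.mem_biUnion, Finset.mem_range,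
    Finset.mem_union, Finset.mem_image, Finset.mem_filter, Finset.mem_Icc]
  constructor
  · rintro (h | ⟨p, hp, (h | ⟨t, ⟨ht, h1⟩, h⟩ | ⟨x, ⟨hx1, hx2⟩, h⟩)⟩)
    · exact Or.inl h
    · exact Or.inr ⟨p, hp, Or.inl h⟩
    · exact Or.inr ⟨p, hp, Or.inr (Or.inl ⟨t, ht, h1, h.symm⟩)⟩
    · exact Or.inr ⟨p, hp, Or.inr (Or.inr ⟨x, hx1, hx2, h.symm⟩)⟩
  · rintro (h | ⟨p, hp, (h | ⟨t, ht, h1, h⟩ | ⟨x, hx1, hx2, h⟩)⟩)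
    · exact Or.inl h
    · exact Or.inr ⟨p, hp, Or.inl h⟩
    · exact Or.inr ⟨p, hp, Or.inr (Or.inl ⟨t, ⟨ht, h1⟩, h.symm⟩)⟩
    · exact Or.inr ⟨p, hp, Or.inr (Or.inr ⟨x, ⟨hx1, hx2⟩, h.symm⟩)⟩

-- helper lemmas on the forbidden set
lemma lid_notS_elim {T : Finset ℕ} {k d : ℕ}
    (h : d ∉ Set.Icc 1 k \ ((fun t => k - t) '' ↑T)) (h1 : 1 ≤ d) :
    (∃ t ∈ T, d = k - t) ∨ k < d := by
  by_cases hdk : d ≤ k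
  · left
    have hmem : d ∈ ((fun t => k - t) '' ↑T) := by
      by_contra hcon
      exact h ⟨Set.mem_Icc.mpr ⟨h1, hdk⟩, hcon⟩
    obtain ⟨t, ht, he⟩ := hmem
    exact ⟨t, ht, he.symm⟩
  · right; omega

lemma lid_notS_of_mem {T : Finset ℕ} {k t : ℕ} (ht : t ∈ T) :
    (k - t : ℕ) ∉ Set.Icc 1 k \ ((fun t => k - t) '' ↑T) := by
  rintro ⟨_, h2⟩
  exact h2 ⟨t, ht, rfl⟩

lemma lid_notS_of_gt {T : Finset ℕ} {k d : ℕ} (h : k < d) :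
    d ∉ Set.Icc 1 k \ ((fun t => k - t) '' ↑T) := by
  rintro ⟨h1, _⟩
  exact absurd (Set.mem_Icc.mp h1).2 (by omega)

lemma lid_notS_of_lt {T : Finset ℕ} {k d : ℕ} (h : d < 1) :
    d ∉ Set.Icc 1 k \ ((fun t => k - t) '' ↑T) := by
  rintro ⟨h1, _⟩
  exact absurd (Set.mem_Icc.mp h1).1 (by omega)

lemma lid_inS {T : Finset ℕ} {k d : ℕ} (h1 : 1 ≤ d) (h2 : d ≤ k)
    (h3 : ∀ t ∈ T, d ≠ k - t) :
    d ∈ Set.Icc 1 k \ ((fun t => k - t) '' ↑T) := by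
  refine ⟨Set.mem_Icc.mpr ⟨h1, h2⟩, ?_⟩
  rintro ⟨t, ht, he⟩
  exact h3 t ht he.symm

lemma lid_part1 (T : Finset ℕ) (hTne : T.Nonempty) (hTpos : ∀ t ∈ T, 0 < t)
    (c : ℕ) (hc : c = T.max' hTne) (a : ℕ → ℕ → ℕ)
    (ha : ∀ k, c < k →
      IsSlidSeq (Set.Icc 1 k \ ((fun t => k - t) '' ↑T)) (a k)) :
    ∀ k, c < k → ∀ n, 1 ≤ n → n ≤ k - c + 1 → a k n = n := by
  intro k hk n
  induction n using Nat.strong_induction_on with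
  | _ n IH =>
  intro hn1 hn2
  have hck : c ≤ k := le_of_lt hk
  have hc1 : 1 ≤ c := hTpos _ (hc ▸ T.max'_mem hTne)
  have spec := ha k hk n hn1
  have hmem : n ∈ {m | 0 < m ∧ ¬ SlidDecomp (Set.Icc 1 k \ ((fun t => k - t) '' ↑T)) (a k) (n - 1) m} := by
    refine ⟨hn1, ?_⟩
    rintro ⟨L, hL1, hL2, hL3⟩
    have hsub : ∀ x ∈ L, ∀ y ∈ L, x = y := by
      intro x hx y hy
      by_contra hxy
      have hd := hL2 x hx y hy
      have hx' := Finset.mem_Icc.mp (hL1 hx)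
      have hy' := Finset.mem_Icc.mp (hL1 hy)
      rcases lid_notS_elim hd (by omega) with ⟨t, ht, he⟩ | hgt
      · have htc : t ≤ c := hc ▸ T.le_max' t ht
        have htp : 0 < t := hTpos t ht
        omega
      · omega
    rcases L.eq_empty_or_nonempty with rfl | ⟨x, hx⟩
    · simp at hL3; omega
    · have hLx : L = {x} := Finset.eq_singleton_iff_unique_mem.mpr ⟨hx, fun y hy => hsub y hy x hx⟩
      subst hLx
      rw [Finset.sum_singleton] at hL3
      have hx' := Finset.mem_Icc.mp (hL1 hx)
      have := IH x (by omega) (by omega) (by omega)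
      omega
  have hub := spec.2 hmem
  have hself := spec.1
  rcases eq_or_lt_of_le hub with h | h
  · omega
  · exfalso
    apply hself.2
    refine ⟨{a k n}, ?_, ?_, ?_⟩
    · intro y hy
      rw [Finset.mem_singleton] at hy
      subst hy
      rw [Finset.mem_Icc]
      exact ⟨hself.1, by omega⟩
    · intro i hi j hj
      rw [Finset.mem_singleton] at hi hj
      subst hi; subst hj
      simp only [sub_self, Int.natAbs_zero]
      exact lid_notS_of_lt (by omega)
    · rw [Finset.sum_singleton]
      exact (IH (a k n) (by omega) hself.1 (by omega)).symm

lemma lid_decomp_single {S : Set ℕ} (h0 : 0 ∉ S) (a : ℕ → ℕ) {N x w : ℕ}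
    (hx1 : 1 ≤ x) (hx2 : x ≤ N) (hw : w = a x) : SlidDecomp S a N w := by
  refine ⟨{x}, ?_, ?_, by simp [hw]⟩
  · simp [Finset.singleton_subset_iff, Finset.mem_Icc, hx1, hx2]
  · intro i hi j hj
    rw [Finset.mem_singleton] at hi hj
    subst hi; subst hj
    simpa using h0

lemma lid_decomp_pair {S : Set ℕ} (h0 : 0 ∉ S) (a : ℕ → ℕ) {N x y w : ℕ}
    (hx1 : 1 ≤ x) (hx2 : x ≤ N) (hy1 : 1 ≤ y) (hy2 : y ≤ N) (hxy : x ≠ y)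
    (hS : ((x : ℤ) - (y : ℤ)).natAbs ∉ S) (hw : w = a x + a y) :
    SlidDecomp S a N w := by
  refine ⟨{x, y}, ?_, ?_, ?_⟩
  · intro z hz
    rcases Finset.mem_insert.mp hz with rfl | hz
    · exact Finset.mem_Icc.mpr ⟨hx1, hx2⟩
    · rw [Finset.mem_singleton] at hz
      subst hz
      exact Finset.mem_Icc.mpr ⟨hy1, hy2⟩
  · intro i hi j hj
    have hi' : i = x ∨ i = y := by simpa using hi
    have hj' : j = x ∨ j = y := by simpa using hj
    rcases hi' with rfl | rfl <;> rcases hj' with rfl | rfl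
    · simpa using h0
    · exact hS
    · have : ((i : ℤ) - j).natAbs = ((j : ℤ) - i).natAbs := by omega
      rwa [this]
    · simpa using h0
  · rw [Finset.sum_pair hxy, hw]
lemma lid_key (T : Finset ℕ) (hTne : T.Nonempty) (hTpos : ∀ t ∈ T, 0 < t)
    (c : ℕ) (hc : c = T.max' hTne) (a : ℕ → ℕ → ℕ)
    (ha : ∀ k, c < k →
      IsSlidSeq (Set.Icc 1 k \ ((fun t => k - t) '' ↑T)) (a k)) :
    ∀ m : ℕ, ∀ k : ℕ, c < k → m + c + 1 ≤ k →
      (a k (k - c + 2 + m) : ℤ) = (k : ℤ) + fringe T c m := by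
  intro m
  induction m using Nat.strong_induction_on with
  | _ m IH =>
  intro k hk hkm
  have hc1 : 1 ≤ c := hTpos _ (hc ▸ T.max'_mem hTne)
  have hcT : c ∈ T := hc ▸ T.max'_mem hTne
  have htle : ∀ t ∈ T, t ≤ c := fun t ht => hc ▸ T.le_max' t ht
  have h0S : (0 : ℕ) ∉ Set.Icc 1 k \ ((fun t => k - t) '' ↑T) :=
    lid_notS_of_lt Nat.zero_lt_one
  set n := k - c + 2 + m with hn
  have hn1 : 1 ≤ n := by omega
  have spec := ha k hk n hn1
  set g := fringe T c m with hg
  have hgl : 2 - (c : ℤ) ≤ g := fringe_lb T c m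
  have IHval : ∀ p, p < m → (a k (k - c + 2 + p) : ℤ) = (k : ℤ) + fringe T c p :=
    fun p hp => IH p hp k hk (by omega)
  have hfl : ∀ p, 2 - (c : ℤ) ≤ fringe T c p := fringe_lb T c
  have hpart1 := lid_part1 T hTne hTpos c hc a ha k hk
  -- every offset in the fringe set is decomposable
  have hdec : ∀ w : ℕ, 1 ≤ w →
      (w ≤ k - c + 1 ∨ ((w : ℤ) - k) ∈ fringeSet T c (fringe T c) m) →
      SlidDecomp (Set.Icc 1 k \ ((fun t => k - t) '' ↑T)) (a k) (n - 1) w := by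
    intro w hw1 hw2
    rcases hw2 with hw2 | hw2
    · exact lid_decomp_single h0S (a k) hw1 (by omega) (hpart1 w hw1 hw2).symm
    · rw [mem_fringeSet_iff] at hw2
      rcases hw2 with hz | ⟨p, hp, hz | ⟨t, ht, ht1, hz⟩ | ⟨x, hx1, hx2, hz⟩⟩
      · refine lid_decomp_pair h0S (a k) (x := 1) (y := k - c + 1)
          le_rfl (by omega) (by omega) (by omega) (by omega) ?_ ?_
        · have hab : (((1 : ℕ) : ℤ) - ((k - c + 1 : ℕ) : ℤ)).natAbs = k - c := by omega
          rw [hab]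
          exact lid_notS_of_mem hcT
        · have e1 := hpart1 1 le_rfl (by omega)
          have e2 := hpart1 (k - c + 1) (by omega) le_rfl
          omega
      · refine lid_decomp_single h0S (a k) (x := k - c + 2 + p) (by omega) (by omega) ?_
        have := IHval p hp
        omega
      · have htc := htle t ht
        have htp := hTpos t ht
        refine lid_decomp_pair h0S (a k) (x := (2 - (c : ℤ) + p + t).toNat)
          (y := k - c + 2 + p) (by omega) (by omega) (by omega) (by omega) (by omega) ?_ ?_
        · have hab : ((((2 - (c : ℤ) + p + t).toNat : ℕ) : ℤ) -
              ((k - c + 2 + p : ℕ) : ℤ)).natAbs = k - t := by omega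
          rw [hab]
          exact lid_notS_of_mem ht
        · have e1 := hpart1 ((2 - (c : ℤ) + p + t).toNat) (by omega) (by omega)
          have e2 := IHval p hp
          omega
      · refine lid_decomp_pair h0S (a k) (x := x.toNat) (y := k - c + 2 + p)
          (by omega) (by omega) (by omega) (by omega) (by omega) ?_ ?_
        · apply lid_notS_of_gt
          omega
        · have e1 := hpart1 x.toNat (by omega) (by omega)
          have e2 := IHval p hp
          omega
  set m₀ := ((k : ℤ) + g).toNat with hm₀
  have hm₀' : (m₀ : ℤ) = (k : ℤ) + g := by omega
  have hnotdec : ¬ SlidDecomp (Set.Icc 1 k \ ((fun t => k - t) '' ↑T)) (a k) (n - 1) m₀ := by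
    rintro ⟨L, hL1, hL2, hL3⟩
    have hgap : ∀ x ∈ L, ∀ y ∈ L, x < y →
        ((∃ t ∈ T, (y : ℤ) - x = (k : ℤ) - t) ∨ (k : ℤ) < (y : ℤ) - x) := by
      intro x hx y hy hxy
      have hd := hL2 y hy x hx
      rcases lid_notS_elim hd (by omega) with ⟨t, ht, he⟩ | hgt
      · have := htle t ht
        exact Or.inl ⟨t, ht, by omega⟩
      · exact Or.inr (by omega)
    have hgapc : ∀ x ∈ L, ∀ y ∈ L, x < y → (k : ℤ) - c ≤ (y : ℤ) - x := by
      intro x hx y hy hxy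
      rcases hgap x hx y hy hxy with ⟨t, ht, he⟩ | h
      · have := htle t ht; omega
      · omega
    have h3 : ¬ (∃ x ∈ L, ∃ y ∈ L, ∃ z ∈ L, x < y ∧ y < z) := by
      rintro ⟨x, hx, y, hy, z, hz, hxy, hyz⟩
      have hx' := Finset.mem_Icc.mp (hL1 hx)
      have hz' := Finset.mem_Icc.mp (hL1 hz)
      have b1 := hgapc x hx y hy hxy
      have b2 := hgapc y hy z hz hyz
      omega
    rcases L.eq_empty_or_nonempty with rfl | hne
    · simp at hL3; omega
    have hu := L.min'_mem hne
    have hv := L.max'_mem hne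
    set u := L.min' hne with hudef
    set v := L.max' hne with hvdef
    have hsubuv : L ⊆ {u, v} := by
      intro w hw
      have h1 := L.min'_le w hw
      have h2 := L.le_max' w hw
      rcases eq_or_lt_of_le h1 with h | h
      · exact Finset.mem_insert.mpr (Or.inl h.symm)
      rcases eq_or_lt_of_le h2 with h' | h'
      · exact Finset.mem_insert.mpr (Or.inr (Finset.mem_singleton.mpr h'))
      · exact absurd ⟨u, hu, w, hw, v, hv, h, h'⟩ h3
    have hu' := Finset.mem_Icc.mp (hL1 hu)
    have hv' := Finset.mem_Icc.mp (hL1 hv)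
    by_cases huv : u = v
    · -- singleton
      have hLu : L = {u} := by
        apply Finset.Subset.antisymm
        · intro w hw
          rcases Finset.mem_insert.mp (hsubuv hw) with h | h
          · simp [h]
          · rw [Finset.mem_singleton] at h; simp [h, huv]
        · simpa using hu
      rw [hLu, Finset.sum_singleton] at hL3
      by_cases husmall : u ≤ k - c + 1
      · have := hpart1 u (by omega) husmall
        omega
      · have hp : u - (k - c + 2) < m := by omega
        have hue : u = k - c + 2 + (u - (k - c + 2)) := by omega
        have := IHval (u - (k - c + 2)) hp
        rw [← hue] at this
        have hgeq : g = fringe T c (u - (k - c + 2)) := by omega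
        exact fringe_not_mem T c m (by
          rw [mem_fringeSet_iff]
          exact Or.inr ⟨u - (k - c + 2), hp, Or.inl hgeq⟩)
    · -- pair
      have huvlt : u < v := lt_of_le_of_ne (by exact L.min'_le v hv) huv
      have hLuv : L = {u, v} := by
        apply Finset.Subset.antisymm hsubuv
        intro w hw
        rcases Finset.mem_insert.mp hw with h | h
        · subst h; exact hu
        · rw [Finset.mem_singleton] at h; subst h; exact hv
      rw [hLuv, Finset.sum_pair (by omega)] at hL3
      by_cases hvsmall : v ≤ k - c + 1
      · -- both initial
        rcases hgap u hu v hv huvlt with ⟨t, ht, he⟩ | h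
        · have htc := htle t ht
          have hu1 : u = 1 := by omega
          have hvk : v = k - c + 1 := by omega
          have e1 := hpart1 u (by omega) (by omega)
          have e2 := hpart1 v (by omega) (by omega)
          have hgeq : g = 2 - (c : ℤ) := by omega
          exact fringe_not_mem T c m (by
            rw [mem_fringeSet_iff]
            exact Or.inl hgeq)
        · omega
      · -- v is a fringe index
        have hq : v - (k - c + 2) < m := by omega
        have hve : v = k - c + 2 + (v - (k - c + 2)) := by omega
        have ev := IHval (v - (k - c + 2)) hq
        rw [← hve] at ev
        by_cases husmall : u ≤ k - c + 1
        · have eu := hpart1 u (by omega) husmall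
          rcases hgap u hu v hv huvlt with ⟨t, ht, he⟩ | h
          · have htc := htle t ht
            have htp := hTpos t ht
            have hgeq : g = 2 - (c : ℤ) + (v - (k - c + 2) : ℕ) + t +
                fringe T c (v - (k - c + 2)) := by omega
            exact fringe_not_mem T c m (by
              rw [mem_fringeSet_iff]
              exact Or.inr ⟨v - (k - c + 2), hq, Or.inr (Or.inl ⟨t, ht, by omega, hgeq⟩)⟩)
          · have hgeq : g = fringe T c (v - (k - c + 2)) + (u : ℤ) := by omega
            exact fringe_not_mem T c m (by
              rw [mem_fringeSet_iff]
              exact Or.inr ⟨v - (k - c + 2), hq, Or.inr (Or.inr ⟨(u : ℤ), by omega, by omega, hgeq⟩)⟩)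
        · -- both fringe: gap too small
          have := hgapc u hu v hv huvlt
          omega
  have hm₀mem : m₀ ∈ {w | 0 < w ∧
      ¬ SlidDecomp (Set.Icc 1 k \ ((fun t => k - t) '' ↑T)) (a k) (n - 1) w} :=
    ⟨by omega, hnotdec⟩
  have hub := spec.2 hm₀mem
  have hself := spec.1
  rcases eq_or_lt_of_le hub with h | h
  · omega
  · exfalso
    apply hself.2
    apply hdec (a k n) hself.1
    by_cases hw : a k n ≤ k - c + 1
    · exact Or.inl hw
    · exact Or.inr (mem_of_lt_fringe T c m (by omega) (by omega))

theorem initial_values_fixed_fringes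
    (T : Finset ℕ) (hTne : T.Nonempty) (hTpos : ∀ t ∈ T, 0 < t)
    (c : ℕ) (hc : c = T.max' hTne)
    (a : ℕ → ℕ → ℕ)
    (ha : ∀ k, c < k →
      IsSlidSeq (Set.Icc 1 k \ ((fun t => k - t) '' ↑T)) (a k)) :
    (∀ k, c < k → ∀ n, 1 ≤ n → n ≤ k - c + 1 → a k n = n) ∧
    (∀ i : ℤ, ∃ f : ℤ, ∀ k : ℕ, c < k →
      i + 2 * (c : ℤ) - 1 ≤ (k : ℤ) → 1 ≤ (k : ℤ) + i →
      (a k ((k : ℤ) + i).toNat : ℤ) = (k : ℤ) + f) := by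
  have hc1 : 1 ≤ c := hTpos _ (hc ▸ T.max'_mem hTne)
  refine ⟨lid_part1 T hTne hTpos c hc a ha, ?_⟩
  intro i
  by_cases hi : i ≤ 1 - (c : ℤ)
  · refine ⟨i, fun k hk h1 h2 => ?_⟩
    have hn : 1 ≤ ((k : ℤ) + i).toNat ∧ ((k : ℤ) + i).toNat ≤ k - c + 1 := by omega
    have := lid_part1 T hTne hTpos c hc a ha k hk (((k : ℤ) + i).toNat) hn.1 hn.2
    omega
  · refine ⟨fringe T c (i + c - 2).toNat, fun k hk h1 h2 => ?_⟩
    have hidx : ((k : ℤ) + i).toNat = k - c + 2 + (i + c - 2).toNat := by omega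
    rw [hidx]
    exact lid_key T hTne hTpos c hc a ha (i + c - 2).toNat k hk (by omega)
end

section
/- Let k and c be positive integers with 2c < k, let S = {1,...,k} \ {k − c}, and let (a_n)_{n≥1} be the S-LID sequence. For each n ≥ 0, let d_n be the number of sets L ⊆ {1, ..., n} such that |i − j| ∉ S for all i, j ∈ L (equivalently, the number of S-LID decompositions formable with {a_1, ..., a_n}, including the empty decomposition). Then d_n = d_{n−1} + d_{n−k+c} − d_{n−k+c−1} + d_{n−k−1} for all integers n > k + 1. -/
open Finset

attribute [local instance] Classical.propDecidable

/-- The finset of `S`-legal subsets of `T`. -/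
noncomputable def legalSets (S : Set ℕ) (T : Finset ℕ) : Finset (Finset ℕ) :=
  T.powerset.filter fun L => SlidLegal S L

lemma mem_legalSets {S : Set ℕ} {T L : Finset ℕ} :
    L ∈ legalSets S T ↔ L ⊆ T ∧ SlidLegal S L := by
  simp [legalSets]

lemma slidLegal_mono {S : Set ℕ} {L L' : Finset ℕ} (h : L' ⊆ L) (hL : SlidLegal S L) :
    SlidLegal S L' := fun i hi j hj => hL i (h hi) j (h hj)

lemma nat_card_eq (S : Set ℕ) (n : ℕ) :
    Nat.card {L : Finset ℕ // L ⊆ Finset.Icc 1 n ∧ SlidLegal S L}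
      = (legalSets S (Icc 1 n)).card := by
  have he : {L : Finset ℕ // L ⊆ Finset.Icc 1 n ∧ SlidLegal S L}
      ≃ {L : Finset ℕ // L ∈ legalSets S (Icc 1 n)} :=
    Equiv.subtypeEquivRight fun L => mem_legalSets.symm
  rw [Nat.card_congr he, Nat.card_eq_finsetCard]

lemma legalSets_card_split (S : Set ℕ) (T : Finset ℕ) (x : ℕ) :
    (legalSets S T).card =
      ((legalSets S T).filter fun L => x ∈ L).card + (legalSets S (T.erase x)).card := by
  have h2 : (legalSets S T).filter (fun L => x ∉ L) = legalSets S (T.erase x) := by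
    ext L
    simp only [mem_filter, mem_legalSets, Finset.subset_erase]
    tauto
  rw [← h2, Finset.card_filter_add_card_filter_not]

lemma card_filter_mem_eq (S : Set ℕ) (x : ℕ) (T U : Finset ℕ) (hxU : x ∉ U)
    (h1 : ∀ L, SlidLegal S L → L ⊆ T → x ∈ L → L.erase x ⊆ U)
    (h2 : ∀ L, SlidLegal S L → L ⊆ U → SlidLegal S (insert x L) ∧ insert x L ⊆ T) :
    ((legalSets S T).filter fun L => x ∈ L).card = (legalSets S U).card := by
  apply Finset.card_bij' (fun L _ => L.erase x) (fun L _ => insert x L)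
  · intro L hL
    simp only [mem_filter] at hL
    exact Finset.insert_erase hL.2
  · intro L hL
    simp only [mem_legalSets] at hL
    exact Finset.erase_insert (fun hx => hxU (hL.1 hx))
  · intro L hL
    simp only [mem_filter, mem_legalSets] at hL
    exact mem_legalSets.2 ⟨h1 L hL.1.2 hL.1.1 hL.2, slidLegal_mono (erase_subset _ _) hL.1.2⟩
  · intro L hL
    simp only [mem_legalSets] at hL
    obtain ⟨hleg, hsub⟩ := h2 L hL.2 hL.1
    simp only [mem_filter, mem_legalSets]
    exact ⟨⟨hsub, hleg⟩, mem_insert_self _ _⟩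

lemma Icc_erase_top (t : ℕ) : (Icc 1 (t + 1)).erase (t + 1) = Icc 1 t := by
  ext x; simp only [mem_erase, mem_Icc]; omega

lemma notMem_S {k c x : ℕ} : x ∉ Set.Icc 1 k \ {k - c} ↔ x = 0 ∨ k < x ∨ x = k - c := by
  simp only [Set.mem_diff, Set.mem_Icc, Set.mem_singleton_iff]
  omega

lemma natAbs_eq_sub {i j : ℕ} (h : j ≤ i) : ((i : ℤ) - j).natAbs = i - j := by omega

/-- The main counting identity, stated subtraction-free. -/
lemma key_identity (k c : ℕ) (hc : 0 < c) (hck : 2 * c < k) (m : ℕ) :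
    (legalSets (Set.Icc 1 k \ {k - c}) (Icc 1 (m + k + 1))).card
      + (legalSets (Set.Icc 1 k \ {k - c}) (Icc 1 (m + c))).card
    = (legalSets (Set.Icc 1 k \ {k - c}) (Icc 1 (m + k))).card
      + (legalSets (Set.Icc 1 k \ {k - c}) (Icc 1 (m + c + 1))).card
      + (legalSets (Set.Icc 1 k \ {k - c}) (Icc 1 m)).card := by
  set S := Set.Icc 1 k \ {k - c} with hS
  set U : Finset ℕ := insert (m + c + 1) (Icc 1 m) with hU
  have hmemU : ∀ x, x ∈ U ↔ x = m + c + 1 ∨ (1 ≤ x ∧ x ≤ m) := by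
    intro x; simp [hU, mem_insert, mem_Icc]
  -- Step 1: split at top element m+k+1
  have s1 := legalSets_card_split S (Icc 1 (m + k + 1)) (m + k + 1)
  rw [Icc_erase_top] at s1
  -- Step 2: bijection with legal subsets of U
  have s2 : ((legalSets S (Icc 1 (m + k + 1))).filter fun L => (m + k + 1) ∈ L).card
      = (legalSets S U).card := by
    apply card_filter_mem_eq
    · rw [hmemU]; omega
    · intro L hleg hsub hx
      intro y hy
      rw [mem_erase] at hy
      have hy1 := hsub hy.2
      rw [mem_Icc] at hy1
      have := hleg _ hx _ hy.2
      rw [natAbs_eq_sub (by omega), hS, notMem_S] at this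
      rw [hmemU]
      omega
    · intro L hleg hsub
      constructor
      · intro i hi j hj
        rw [mem_insert] at hi hj
        have habs : ∀ p q : ℕ, ((p : ℤ) - q).natAbs = ((q : ℤ) - p).natAbs := by
          intro p q; omega
        rcases hi with hi | hi <;> rcases hj with hj | hj
        · subst hi; subst hj; simp [hS, notMem_S]
        · subst hi
          have hj2 := (hmemU j).1 (hsub hj)
          rw [natAbs_eq_sub (by omega), hS, notMem_S]
          omega
        · subst hj
          have hi2 := (hmemU i).1 (hsub hi)
          rw [habs, natAbs_eq_sub (by omega), hS, notMem_S]
          omega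
        · exact hleg i hi j hj
      · intro y hy
        rw [mem_insert] at hy
        rw [mem_Icc]
        rcases hy with hy | hy
        · omega
        · have := (hmemU y).1 (hsub hy); omega
  -- Step 3: split legal subsets of U at m+c+1
  have s3 := legalSets_card_split S U (m + c + 1)
  have hUe : U.erase (m + c + 1) = Icc 1 m := by
    rw [hU, Finset.erase_insert]
    rw [mem_Icc]; omega
  rw [hUe] at s3
  -- Step 4: split legal subsets of Icc 1 (m+c+1) at m+c+1
  have s4 := legalSets_card_split S (Icc 1 (m + c + 1)) (m + c + 1)
  rw [Icc_erase_top] at s4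
  -- Step 5: the two filters coincide
  have s5 : ((legalSets S U).filter fun L => (m + c + 1) ∈ L)
      = ((legalSets S (Icc 1 (m + c + 1))).filter fun L => (m + c + 1) ∈ L) := by
    ext L
    simp only [mem_filter, mem_legalSets]
    constructor
    · rintro ⟨⟨hsub, hleg⟩, hx⟩
      refine ⟨⟨fun y hy => ?_, hleg⟩, hx⟩
      have := (hmemU y).1 (hsub hy)
      rw [mem_Icc]; omega
    · rintro ⟨⟨hsub, hleg⟩, hx⟩
      refine ⟨⟨fun y hy => ?_, hleg⟩, hx⟩
      rw [hmemU]
      by_cases hyx : y = m + c + 1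
      · left; exact hyx
      · right
        have hy1 := hsub hy
        rw [mem_Icc] at hy1
        have := hleg _ hx _ hy
        rw [natAbs_eq_sub (by omega), hS, notMem_S] at this
        omega
  rw [s5] at s3
  omega

theorem number_of_decompositions_recurrence
    (k c : ℕ) (hc : 0 < c) (hck : 2 * c < k)
    (a : ℕ → ℕ) (ha : IsSlidSeq (Set.Icc 1 k \ {k - c}) a)
    (d : ℕ → ℕ)
    (hd : ∀ n, d n = Nat.card {L : Finset ℕ //
      L ⊆ Finset.Icc 1 n ∧ SlidLegal (Set.Icc 1 k \ {k - c}) L}) :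
    ∀ n, k + 1 < n →
      (d n : ℤ) = d (n - 1) + d (n - k + c) - d (n - k + c - 1) + d (n - k - 1) := by
  intro n hn
  obtain ⟨m, rfl⟩ : ∃ m, n = m + k + 1 := ⟨n - k - 1, by omega⟩
  have hdN : ∀ t, d t = (legalSets (Set.Icc 1 k \ {k - c}) (Icc 1 t)).card := by
    intro t; rw [hd t, nat_card_eq]
  have e1 : m + k + 1 - 1 = m + k := by omega
  have e2 : m + k + 1 - k + c = m + c + 1 := by omega
  have e3 : m + k + 1 - k + c - 1 = m + c := by omega
  have e4 : m + k + 1 - k - 1 = m := by omega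
  rw [e1, e3, e2, e4, hdN, hdN, hdN, hdN, hdN]
  have := key_identity k c hc hck m
  push_cast
  omega
end
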